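/- arXiv:2302.00657 — 3 statements merged into one kernel-verified Lean document; each statement's English description precedes it below -/
import Mathlib

section
/- Let H be a thin spider with partition (S, K, R) such that R = ∅, let u ∈ S, and let uw be a tail added to H (w ∉ V(H)). Then the minimum number of fill edges (excluding the tail uw) in a P4-sparse completion of H+uw equals |K| − 1. -/
open SimpleGraph Set

variable {α : Type*}

/-- The graph `G + uw` obtained from `G` by adding the tail edge `uw`. -/
def addTail (G : SimpleGraph α) (u w : α) : SimpleGraph α :=
  G ⊔ SimpleGraph.fromEdgeSet {s(u, w)}

/-- The number of fill edges of a completion `G'` of the base graph `base`: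
the edges of `G'` that are not edges of `base`. -/
noncomputable def fillCount (base G' : SimpleGraph α) : ℕ :=
  (G'.edgeSet \ base.edgeSet).ncard

/-- `S` is an independent set of the graph `G`. -/
def IsIndepSetOn (G : SimpleGraph α) (S : Set α) : Prop :=
  ∀ x ∈ S, ∀ y ∈ S, ¬ G.Adj x y

/-- A graph is split if its vertex set can be partitioned into a clique and an
independent set. -/
def IsSplitGraph (G : SimpleGraph α) : Prop :=
  ∃ K S : Set α, K ∪ S = Set.univ ∧ Disjoint K S ∧ G.IsClique K ∧ IsIndepSetOn G S

/-- `a b c d` (in this order) induce a chordless path `P₄` in `G`. -/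
def IsInducedP4 (G : SimpleGraph α) (a b c d : α) : Prop :=
  a ≠ b ∧ a ≠ c ∧ a ≠ d ∧ b ≠ c ∧ b ≠ d ∧ c ≠ d ∧
  G.Adj a b ∧ G.Adj b c ∧ G.Adj c d ∧ ¬ G.Adj a c ∧ ¬ G.Adj a d ∧ ¬ G.Adj b d

/-- `a b c d` (in this order) induce a chordless cycle `C₄` in `G`. -/
def IsInducedC4 (G : SimpleGraph α) (a b c d : α) : Prop :=
  a ≠ b ∧ a ≠ c ∧ a ≠ d ∧ b ≠ c ∧ b ≠ d ∧ c ≠ d ∧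
  G.Adj a b ∧ G.Adj b c ∧ G.Adj c d ∧ G.Adj d a ∧ ¬ G.Adj a c ∧ ¬ G.Adj b d

/-- `a b c d` induce a `2K₂` (two independent edges `ab` and `cd`) in `G`. -/
def IsInduced2K2 (G : SimpleGraph α) (a b c d : α) : Prop :=
  a ≠ b ∧ a ≠ c ∧ a ≠ d ∧ b ≠ c ∧ b ≠ d ∧ c ≠ d ∧
  G.Adj a b ∧ G.Adj c d ∧ ¬ G.Adj a c ∧ ¬ G.Adj a d ∧ ¬ G.Adj b c ∧ ¬ G.Adj b d

/-- A graph is threshold iff it has no induced `C₄`, `P₄`, or `2K₂`. -/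
def IsThresholdGraph (G : SimpleGraph α) : Prop :=
  (∀ a b c d, ¬ IsInducedC4 G a b c d) ∧ (∀ a b c d, ¬ IsInducedP4 G a b c d) ∧
  (∀ a b c d, ¬ IsInduced2K2 G a b c d)

/-- A graph is quasi-threshold iff it has no induced `C₄` or `P₄`. -/
def IsQuasiThresholdGraph (G : SimpleGraph α) : Prop :=
  (∀ a b c d, ¬ IsInducedC4 G a b c d) ∧ (∀ a b c d, ¬ IsInducedP4 G a b c d)

/-- `t` is the vertex set of an induced `P₄` of `G`. -/
def IsP4SetOn (G : SimpleGraph α) (t : Set α) : Prop :=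
  ∃ a b c d : α, t = {a, b, c, d} ∧ IsInducedP4 G a b c d

/-- A graph is `P₄`-sparse iff every set of five vertices induces at most one `P₄`. -/
def IsP4Sparse (G : SimpleGraph α) : Prop :=
  ∀ s : Set α, s.ncard = 5 →
    ∀ t₁ ⊆ s, ∀ t₂ ⊆ s, IsP4SetOn G t₁ → IsP4SetOn G t₂ → t₁ = t₂

/-- The subgraph of `H` induced by the set `R` (as a graph on the same vertex type,
all vertices outside `R` being isolated). -/
def restrictSet (H : SimpleGraph α) (R : Set α) : SimpleGraph α where
  Adj x y := H.Adj x y ∧ x ∈ R ∧ y ∈ R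
  symm := ⟨fun x y ⟨h, hx, hy⟩ => ⟨h.symm, hy, hx⟩⟩
  loopless := ⟨fun x h => H.loopless.irrefl x h.1⟩

/-- `(S, K, R)` is a thin-spider partition of (the vertex set of) `H`. -/
def ThinSpider (H : SimpleGraph α) (S K R : Set α) : Prop :=
  IsIndepSetOn H S ∧ H.IsClique K ∧ S.ncard = K.ncard ∧ 2 ≤ K.ncard ∧
  Disjoint S K ∧ Disjoint S R ∧ Disjoint K R ∧
  (∀ r ∈ R, ∀ k ∈ K, H.Adj r k) ∧ (∀ r ∈ R, ∀ s ∈ S, ¬ H.Adj r s) ∧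
  ∃ f : α → α, Set.BijOn f S K ∧ ∀ s ∈ S, ∀ k ∈ K, (H.Adj s k ↔ k = f s)

/-- `(S, K, R)` is a thick-spider partition of (the vertex set of) `H`;
thick spiders are assumed to have `|K| ≥ 3`. -/
def ThickSpider (H : SimpleGraph α) (S K R : Set α) : Prop :=
  IsIndepSetOn H S ∧ H.IsClique K ∧ S.ncard = K.ncard ∧ 3 ≤ K.ncard ∧
  Disjoint S K ∧ Disjoint S R ∧ Disjoint K R ∧
  (∀ r ∈ R, ∀ k ∈ K, H.Adj r k) ∧ (∀ r ∈ R, ∀ s ∈ S, ¬ H.Adj r s) ∧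
  ∃ f : α → α, Set.BijOn f S K ∧ ∀ s ∈ S, ∀ k ∈ K, (H.Adj s k ↔ k ≠ f s)

/-- The set of possible numbers of fill edges of completions of `base` into the
graph class `C`. -/
def completionFills (C : SimpleGraph α → Prop) (base : SimpleGraph α) : Set ℕ :=
  {n | ∃ G' : SimpleGraph α, base ≤ G' ∧ C G' ∧ fillCount base G' = n}
private def spComp (H : SimpleGraph α) (u w : α) (K : Set α) : SimpleGraph α where
  Adj x y := H.Adj x y ∨ (x = u ∧ y ≠ u ∧ (y = w ∨ y ∈ K)) ∨ (y = u ∧ x ≠ u ∧ (x = w ∨ x ∈ K))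
  symm := by
    refine ⟨?_⟩
    intro x y h
    rcases h with h | h | h
    · exact Or.inl h.symm
    · exact Or.inr (Or.inr h)
    · exact Or.inr (Or.inl h)
  loopless := by
    refine ⟨?_⟩
    intro x h
    rcases h with h | h | h
    · exact H.loopless.irrefl x h
    · exact h.2.1 h.1
    · exact h.2.1 h.1

private lemma spComp_adj (H : SimpleGraph α) (u w : α) (K : Set α) (x y : α) :
    (spComp H u w K).Adj x y ↔
      (H.Adj x y ∨ (x = u ∧ y ≠ u ∧ (y = w ∨ y ∈ K)) ∨ (y = u ∧ x ≠ u ∧ (x = w ∨ x ∈ K))) :=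
  Iff.rfl

private lemma set_ncard_five {x1 x2 x3 x4 x5 : α}
    (h12 : x1 ≠ x2) (h13 : x1 ≠ x3) (h14 : x1 ≠ x4) (h15 : x1 ≠ x5)
    (h23 : x2 ≠ x3) (h24 : x2 ≠ x4) (h25 : x2 ≠ x5)
    (h34 : x3 ≠ x4) (h35 : x3 ≠ x5) (h45 : x4 ≠ x5) :
    ({x1, x2, x3, x4, x5} : Set α).ncard = 5 := by
  have f1 : ({x5} : Set α).Finite := Set.finite_singleton _
  have f2 := f1.insert x4
  have f3 := f2.insert x3
  have f4 := f3.insert x2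
  rw [Set.ncard_insert_of_notMem (by simp [h12, h13, h14, h15]) f4,
      Set.ncard_insert_of_notMem (by simp [h23, h24, h25]) f3,
      Set.ncard_insert_of_notMem (by simp [h34, h35]) f2,
      Set.ncard_insert_of_notMem (by simp [h45]) f1,
      Set.ncard_singleton]

private lemma six_le_ncard {x1 x2 x3 x4 x5 x6 : α} {s : Set α} (hs : s.Finite)
    (hsub : ({x1, x2, x3, x4, x5, x6} : Set α) ⊆ s)
    (h12 : x1 ≠ x2) (h13 : x1 ≠ x3) (h14 : x1 ≠ x4) (h15 : x1 ≠ x5) (h16 : x1 ≠ x6)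
    (h23 : x2 ≠ x3) (h24 : x2 ≠ x4) (h25 : x2 ≠ x5) (h26 : x2 ≠ x6)
    (h34 : x3 ≠ x4) (h35 : x3 ≠ x5) (h36 : x3 ≠ x6)
    (h45 : x4 ≠ x5) (h46 : x4 ≠ x6) (h56 : x5 ≠ x6) : 6 ≤ s.ncard := by
  have f1 : ({x6} : Set α).Finite := Set.finite_singleton _
  have f2 := f1.insert x5
  have f3 := f2.insert x4
  have f4 := f3.insert x3
  have f5 := f4.insert x2
  have hcard : ({x1, x2, x3, x4, x5, x6} : Set α).ncard = 6 := by
    rw [Set.ncard_insert_of_notMem (by simp [h12, h13, h14, h15, h16]) f5,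
        Set.ncard_insert_of_notMem (by simp [h23, h24, h25, h26]) f4,
        Set.ncard_insert_of_notMem (by simp [h34, h35, h36]) f3,
        Set.ncard_insert_of_notMem (by simp [h45, h46]) f2,
        Set.ncard_insert_of_notMem (by simp [h56]) f1,
        Set.ncard_singleton]
  calc 6 = ({x1, x2, x3, x4, x5, x6} : Set α).ncard := hcard.symm
    _ ≤ s.ncard := Set.ncard_le_ncard hsub hs

set_option maxHeartbeats 1600000 in
/-- tail at `u ∈ S` of a thin spider with `R = ∅`. -/
theorem thinSpider_tail_S_empty_R [Fintype α]
    (H : SimpleGraph α) (u w : α) (S K R : Set α)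
    (hspider : ThinSpider H S K R)
    (hcover : S ∪ K ∪ R = {w}ᶜ)
    (hw : ∀ x, ¬ H.Adj w x)
    (hR : R = ∅) (hu : u ∈ S) :
    IsLeast (completionFills IsP4Sparse (addTail H u w)) (K.ncard - 1) := by
  classical
  haveI : Nonempty α := ⟨u⟩
  subst hR
  rw [Set.union_empty] at hcover
  obtain ⟨hSind, hKcl, -, -, hSK, -, -, -, -, f, hf, hadj⟩ := hspider
  -- basic facts
  have hwSK : w ∉ S ∪ K := by rw [hcover]; simp
  have hwS : w ∉ S := fun h => hwSK (Or.inl h)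
  have hwK : w ∉ K := fun h => hwSK (Or.inr h)
  have hcov : ∀ x : α, x ≠ w → x ∈ S ∨ x ∈ K := by
    intro x hx
    have hx2 : x ∈ S ∪ K := by rw [hcover]; simpa using hx
    exact hx2
  have hSKne : ∀ x ∈ S, ∀ y ∈ K, x ≠ y := fun x hx y hy h => Set.disjoint_left.1 hSK hx (h ▸ hy)
  have hfinj : Set.InjOn f S := hf.injOn
  have hfuK : f u ∈ K := hf.mapsTo hu
  have huK : u ∉ K := fun h => hSKne u hu u h rfl
  have huw : u ≠ w := fun h => hwS (h ▸ hu)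
  have hwSne : ∀ x ∈ S, w ≠ x := fun x hx h => hwS (h ▸ hx)
  have hwKne : ∀ x ∈ K, w ≠ x := fun x hx h => hwK (h ▸ hx)
  have huKne : ∀ x ∈ K, u ≠ x := fun x hx => hSKne u hu x hx
  have hSadj : ∀ s ∈ S, ∀ x, H.Adj s x ↔ x = f s := by
    intro s hs x
    constructor
    · intro h
      by_cases hxw : x = w
      · subst hxw; exact absurd h.symm (hw s)
      · rcases hcov x hxw with hxS | hxK
        · exact absurd h (hSind s hs x hxS)
        · exact (hadj s hs x hxK).1 h
    · rintro rfl; exact (hadj s hs (f s) (hf.mapsTo hs)).2 rfl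
  set g := Function.invFunOn f S with hgdef
  have hfg : ∀ k ∈ K, f (g k) = k := by
    intro k hk
    obtain ⟨a, ha, hak⟩ := hf.surjOn hk
    exact Function.invFunOn_eq ⟨a, ha, hak⟩
  have hgS : ∀ k ∈ K, g k ∈ S := by
    intro k hk
    obtain ⟨a, ha, hak⟩ := hf.surjOn hk
    exact Function.invFunOn_mem ⟨a, ha, hak⟩
  set B := addTail H u w with hBdef
  have hBadj : ∀ x y, B.Adj x y ↔ (H.Adj x y ∨ (x = u ∧ y = w) ∨ (x = w ∧ y = u)) := by
    intro x y
    rw [hBdef]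
    simp only [addTail, SimpleGraph.sup_adj, SimpleGraph.fromEdgeSet_adj, Set.mem_singleton_iff,
      Sym2.eq_iff]
    constructor
    · rintro (h | ⟨h | h, -⟩)
      · exact Or.inl h
      · exact Or.inr (Or.inl h)
      · exact Or.inr (Or.inr h)
    · rintro (h | ⟨rfl, rfl⟩ | ⟨rfl, rfl⟩)
      · exact Or.inl h
      · exact Or.inr ⟨Or.inl ⟨rfl, rfl⟩, huw⟩
      · exact Or.inr ⟨Or.inr ⟨rfl, rfl⟩, Ne.symm huw⟩
  constructor
  · -- membership : the completion spComp achieves K.ncard - 1 fill edges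
    set G₂ := spComp H u w K with hG2def
    have hG2w : ∀ x, G₂.Adj w x ↔ x = u := by
      intro x
      rw [hG2def, spComp_adj]
      constructor
      · rintro (h | ⟨h, -, -⟩ | ⟨h, -, -⟩)
        · exact absurd h (hw x)
        · exact absurd h (Ne.symm huw)
        · exact h
      · rintro rfl
        exact Or.inr (Or.inr ⟨rfl, Ne.symm huw, Or.inl rfl⟩)
    have hG2u : ∀ x, G₂.Adj u x ↔ (x = w ∨ x ∈ K) := by
      intro x
      rw [hG2def, spComp_adj]
      constructor
      · rintro (h | ⟨-, -, h⟩ | ⟨rfl, h, -⟩)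
        · refine Or.inr ?_
          rw [(hSadj u hu x).1 h]
          exact hfuK
        · exact h
        · exact absurd rfl h
      · rintro (rfl | hxK)
        · exact Or.inr (Or.inl ⟨rfl, Ne.symm huw, Or.inl rfl⟩)
        · exact Or.inr (Or.inl ⟨rfl, fun h => huK (h ▸ hxK), Or.inr hxK⟩)
    have hG2s : ∀ s, s ∈ S → s ≠ u → ∀ x, (G₂.Adj s x ↔ x = f s) := by
      intro s hs hsu x
      rw [hG2def, spComp_adj]
      constructor
      · rintro (h | ⟨h, -, -⟩ | ⟨-, -, (h | h)⟩)
        · exact (hSadj s hs x).1 h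
        · exact absurd h hsu
        · exact absurd (h ▸ hs) hwS
        · exact absurd rfl (hSKne s hs s h)
      · rintro rfl
        exact Or.inl ((hSadj s hs (f s)).2 rfl)
    have hle : B ≤ G₂ := by
      intro x y hxy
      rw [hBadj] at hxy
      rw [hG2def, spComp_adj]
      rcases hxy with h | ⟨rfl, rfl⟩ | ⟨rfl, rfl⟩
      · exact Or.inl h
      · exact Or.inr (Or.inl ⟨rfl, Ne.symm huw, Or.inl rfl⟩)
      · exact Or.inr (Or.inr ⟨rfl, Ne.symm huw, Or.inl rfl⟩)
    -- classification of induced P4s of G₂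
    have hclass : ∀ a b c d, IsInducedP4 G₂ a b c d →
        (∃ s, s ∈ S ∧ s ≠ u ∧ ({a, b, c, d} : Set α) = {w, u, f s, s}) ∨
        (∃ s1 s2, s1 ∈ S ∧ s2 ∈ S ∧ s1 ≠ u ∧ s2 ≠ u ∧ s1 ≠ s2 ∧
          ({a, b, c, d} : Set α) = {s1, f s1, f s2, s2}) := by
      intro a b c d hP
      obtain ⟨hab, hac, had, hbc, hbd, hcd, Eab, Ebc, Ecd, Nac, Nad, Nbd⟩ := hP
      have htot : ∀ x : α, (x = u ∨ x ∈ K) ∨ (x = w ∨ (x ∈ S ∧ x ≠ u)) := by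
        intro x
        by_cases hxw : x = w
        · exact Or.inr (Or.inl hxw)
        · rcases hcov x hxw with hS | hK
          · by_cases hxu : x = u
            · exact Or.inl (Or.inl hxu)
            · exact Or.inr (Or.inr ⟨hS, hxu⟩)
          · exact Or.inl (Or.inr hK)
      have hQadj : ∀ x y, (x = u ∨ x ∈ K) → (y = u ∨ y ∈ K) → x ≠ y → G₂.Adj x y := by
        intro x y hx hy hxy
        rcases hx with rfl | hx
        · rcases hy with rfl | hy
          · exact absurd rfl hxy
          · exact (hG2u y).2 (Or.inr hy)
        · rcases hy with rfl | hy
          · exact ((hG2u x).2 (Or.inr hx)).symm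
          · exact (spComp_adj H u w K x y).2 (Or.inl (hKcl hx hy hxy))
      have hIn : ∀ x y, (x = w ∨ (x ∈ S ∧ x ≠ u)) → (y = w ∨ (y ∈ S ∧ y ≠ u)) → x ≠ y →
          ¬ G₂.Adj x y := by
        intro x y hx hy hxy hAdj
        rcases hx with rfl | ⟨hxS, hxu⟩
        · have h := (hG2w y).1 hAdj
          rcases hy with rfl | ⟨-, hyu⟩
          · exact hxy rfl
          · exact hyu h
        · have h := (hG2s x hxS hxu y).1 hAdj
          rcases hy with rfl | ⟨hyS, -⟩
          · apply hwK; rw [h]; exact hf.mapsTo hxS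
          · exact hSKne y hyS (f x) (hf.mapsTo hxS) h
      have haI : a = w ∨ (a ∈ S ∧ a ≠ u) := by
        rcases htot a with haQ | h
        · exfalso
          have hcI : c = w ∨ (c ∈ S ∧ c ≠ u) := by
            rcases htot c with hcQ | h2
            · exact absurd (hQadj a c haQ hcQ hac) Nac
            · exact h2
          have hdI : d = w ∨ (d ∈ S ∧ d ≠ u) := by
            rcases htot d with hdQ | h2
            · exact absurd (hQadj a d haQ hdQ had) Nad
            · exact h2
          exact hIn c d hcI hdI hcd Ecd
        · exact h
      have hdI : d = w ∨ (d ∈ S ∧ d ≠ u) := by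
        rcases htot d with hdQ | h
        · exfalso
          have hbI : b = w ∨ (b ∈ S ∧ b ≠ u) := by
            rcases htot b with hbQ | h2
            · exact absurd (hQadj b d hbQ hdQ hbd) Nbd
            · exact h2
          exact hIn a b haI hbI hab Eab
        · exact h
      rcases haI with rfl | ⟨haS, hau⟩
      · have hbu : b = u := (hG2w b).1 Eab
        subst hbu
        rcases hdI with rfl | ⟨hdS, hdu⟩
        · exact absurd rfl had
        · have hc : c = f d := (hG2s d hdS hdu c).1 Ecd.symm
          subst hc
          exact Or.inl ⟨d, hdS, hdu, rfl⟩
      · have hb : b = f a := (hG2s a haS hau b).1 Eab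
        subst hb
        rcases hdI with rfl | ⟨hdS, hdu⟩
        · have hc : c = u := (hG2w c).1 Ecd.symm
          subst hc
          refine Or.inl ⟨a, haS, hau, ?_⟩
          ext x
          simp only [Set.mem_insert_iff, Set.mem_singleton_iff]
          tauto
        · have hc : c = f d := (hG2s d hdS hdu c).1 Ecd.symm
          subst hc
          exact Or.inr ⟨a, d, haS, hdS, hau, hdu, had, rfl⟩
    -- P4-sparseness of G₂
    have hsparse : IsP4Sparse G₂ := by
      intro s5 hs5 t1 ht1 t2 ht2 hp1 hp2
      obtain ⟨a, b, c, d, rfl, hP1⟩ := hp1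
      obtain ⟨a', b', c', d', rfl, hP2⟩ := hp2
      have hsixw : ∀ p q : α, p ∈ S → q ∈ S → p ≠ u → q ≠ u → p ≠ q →
          ({w, u} : Set α) ⊆ s5 → ({p, f p, q, f q} : Set α) ⊆ s5 → False := by
        intro p q hp hq hpu hqu hpq hA hB
        have h6 := six_le_ncard (s := s5) (Set.toFinite s5)
          (by
            intro x hx
            simp only [Set.mem_insert_iff, Set.mem_singleton_iff] at hx
            rcases hx with rfl | rfl | rfl | rfl | rfl | rfl
            exacts [hA (by simp), hA (by simp), hB (by simp), hB (by simp), hB (by simp),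
              hB (by simp)])
          (hwSne u hu) (hwSne p hp) (hwKne _ (hf.mapsTo hp)) (hwSne q hq) (hwKne _ (hf.mapsTo hq))
          (Ne.symm hpu) (huKne _ (hf.mapsTo hp)) (Ne.symm hqu) (huKne _ (hf.mapsTo hq))
          (hSKne p hp _ (hf.mapsTo hp)) hpq (hSKne p hp _ (hf.mapsTo hq))
          (Ne.symm (hSKne q hq _ (hf.mapsTo hp))) (fun hh => hpq (hfinj hp hq hh))
          (hSKne q hq _ (hf.mapsTo hq))
        omega
      have hsix : ∀ p q r : α, p ∈ S → q ∈ S → r ∈ S → p ≠ q → p ≠ r → q ≠ r →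
          ({p, f p, q, f q} : Set α) ⊆ s5 → ({r, f r} : Set α) ⊆ s5 → False := by
        intro p q r hp hq hr hpq hpr hqr hA hB
        have h6 := six_le_ncard (s := s5) (Set.toFinite s5)
          (by
            intro x hx
            simp only [Set.mem_insert_iff, Set.mem_singleton_iff] at hx
            rcases hx with rfl | rfl | rfl | rfl | rfl | rfl
            exacts [hA (by simp), hA (by simp), hA (by simp), hA (by simp), hB (by simp),
              hB (by simp)])
          (hSKne p hp _ (hf.mapsTo hp)) hpq (hSKne p hp _ (hf.mapsTo hq)) hpr
          (hSKne p hp _ (hf.mapsTo hr))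
          (Ne.symm (hSKne q hq _ (hf.mapsTo hp))) (fun hh => hpq (hfinj hp hq hh))
          (Ne.symm (hSKne r hr _ (hf.mapsTo hp))) (fun hh => hpr (hfinj hp hr hh))
          (hSKne q hq _ (hf.mapsTo hq)) hqr (hSKne q hq _ (hf.mapsTo hr))
          (Ne.symm (hSKne r hr _ (hf.mapsTo hq))) (fun hh => hqr (hfinj hq hr hh))
          (hSKne r hr _ (hf.mapsTo hr))
        omega
      rcases hclass a b c d hP1 with ⟨s1, hs1S, hs1u, e1⟩ |
          ⟨s1, s2, hs1S, hs2S, hs1u, hs2u, h12, e1⟩ <;>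
        rcases hclass a' b' c' d' hP2 with ⟨s3, hs3S, hs3u, e2⟩ |
          ⟨s3, s4, hs3S, hs4S, hs3u, hs4u, h34, e2⟩ <;>
        rw [e1] at ht1 ⊢ <;> rw [e2] at ht2 ⊢
      · -- T vs T
        by_cases h : s1 = s3
        · subst h; rfl
        · exact absurd (hsixw s1 s3 hs1S hs3S hs1u hs3u h
            (by intro x hx; simp only [Set.mem_insert_iff, Set.mem_singleton_iff] at hx
                rcases hx with rfl | rfl <;> exact ht1 (by simp))
            (by intro x hx; simp only [Set.mem_insert_iff, Set.mem_singleton_iff] at hx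
                rcases hx with rfl | rfl | rfl | rfl
                exacts [ht1 (by simp), ht1 (by simp), ht2 (by simp), ht2 (by simp)])) (fun hF => hF)
      · -- T vs Q
        exact absurd (hsixw s3 s4 hs3S hs4S hs3u hs4u h34
          (by intro x hx; simp only [Set.mem_insert_iff, Set.mem_singleton_iff] at hx
              rcases hx with rfl | rfl <;> exact ht1 (by simp))
          (by intro x hx; simp only [Set.mem_insert_iff, Set.mem_singleton_iff] at hx
              rcases hx with rfl | rfl | rfl | rfl <;> exact ht2 (by simp))) (fun hF => hF)
      · -- Q vs T
        exact absurd (hsixw s1 s2 hs1S hs2S hs1u hs2u h12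
          (by intro x hx; simp only [Set.mem_insert_iff, Set.mem_singleton_iff] at hx
              rcases hx with rfl | rfl <;> exact ht2 (by simp))
          (by intro x hx; simp only [Set.mem_insert_iff, Set.mem_singleton_iff] at hx
              rcases hx with rfl | rfl | rfl | rfl <;> exact ht1 (by simp))) (fun hF => hF)
      · -- Q vs Q
        by_cases h13 : s1 = s3
        · subst h13
          by_cases h24 : s2 = s4
          · subst h24; rfl
          · exact absurd (hsix s1 s2 s4 hs1S hs2S hs4S h12 h34 h24
              (by intro x hx; simp only [Set.mem_insert_iff, Set.mem_singleton_iff] at hx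
                  rcases hx with rfl | rfl | rfl | rfl <;> exact ht1 (by simp))
              (by intro x hx; simp only [Set.mem_insert_iff, Set.mem_singleton_iff] at hx
                  rcases hx with rfl | rfl <;> exact ht2 (by simp))) (fun hF => hF)
        · by_cases h23 : s2 = s3
          · subst h23
            by_cases h14 : s1 = s4
            · subst h14
              ext x
              simp only [Set.mem_insert_iff, Set.mem_singleton_iff]
              tauto
            · exact absurd (hsix s1 s2 s4 hs1S hs2S hs4S h12 h14 h34
                (by intro x hx; simp only [Set.mem_insert_iff, Set.mem_singleton_iff] at hx
                    rcases hx with rfl | rfl | rfl | rfl <;> exact ht1 (by simp))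
                (by intro x hx; simp only [Set.mem_insert_iff, Set.mem_singleton_iff] at hx
                    rcases hx with rfl | rfl <;> exact ht2 (by simp))) (fun hF => hF)
          · exact absurd (hsix s1 s2 s3 hs1S hs2S hs3S h12 h13 h23
              (by intro x hx; simp only [Set.mem_insert_iff, Set.mem_singleton_iff] at hx
                  rcases hx with rfl | rfl | rfl | rfl <;> exact ht1 (by simp))
              (by intro x hx; simp only [Set.mem_insert_iff, Set.mem_singleton_iff] at hx
                  rcases hx with rfl | rfl <;> exact ht2 (by simp))) (fun hF => hF)
    -- fill edges of G₂
    have hfill : G₂.edgeSet \ B.edgeSet = (fun k => s(u, k)) '' (K \ {f u}) := by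
      ext e
      induction e using Sym2.ind with
      | _ x y =>
        simp only [Set.mem_diff, SimpleGraph.mem_edgeSet, Set.mem_image, Set.mem_diff,
          Set.mem_singleton_iff]
        constructor
        · rintro ⟨hxy, hnB⟩
          rw [hG2def, spComp_adj] at hxy
          rcases hxy with h | ⟨hxu, -, (hyw | hyK)⟩ | ⟨hyu, -, (hxw | hxK)⟩
          · exact absurd ((hBadj x y).2 (Or.inl h)) hnB
          · exact absurd ((hBadj x y).2 (Or.inr (Or.inl ⟨hxu, hyw⟩))) hnB
          · refine ⟨y, ⟨hyK, fun h => ?_⟩, by rw [hxu]⟩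
            refine hnB ((hBadj x y).2 (Or.inl ?_))
            rw [hxu]
            exact (hSadj u hu y).2 h
          · exact absurd ((hBadj x y).2 (Or.inr (Or.inr ⟨hxw, hyu⟩))) hnB
          · refine ⟨x, ⟨hxK, fun h => ?_⟩, by rw [hyu]; exact Sym2.eq_swap⟩
            refine hnB ((hBadj x y).2 (Or.inl ?_))
            rw [hyu]
            exact ((hSadj u hu x).2 h).symm
        · rintro ⟨k, ⟨hkK, hkfu⟩, he⟩
          have hA : G₂.Adj u k := (hG2u k).2 (Or.inr hkK)
          have hNB : ¬ B.Adj u k := by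
            intro hB
            rcases (hBadj u k).1 hB with h | ⟨-, h⟩ | ⟨h, -⟩
            · exact hkfu ((hSadj u hu k).1 h)
            · exact hwK (h ▸ hkK)
            · exact huw h
          rw [Sym2.eq_iff] at he
          rcases he with ⟨h1, h2⟩ | ⟨h1, h2⟩
          · rw [← h1, ← h2]
            exact ⟨hA, hNB⟩
          · rw [← h2, ← h1]
            exact ⟨hA.symm, fun hB => hNB hB.symm⟩
    have hinj2 : Set.InjOn (fun k => s(u, k)) (K \ {f u}) := by
      intro k1 h1 k2 h2 he
      simp only [Sym2.eq_iff] at he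
      rcases he with ⟨-, h⟩ | ⟨h1', h2'⟩
      · exact h
      · exact absurd h1' (huKne k2 h2.1)
    exact ⟨G₂, hle, hsparse, by
      show (G₂.edgeSet \ B.edgeSet).ncard = _
      rw [hfill, Set.ncard_image_of_injOn hinj2, Set.ncard_diff_singleton_of_mem hfuK]⟩
  · -- lower bound
    rintro n ⟨G', hle', hsp', rfl⟩
    set F := G'.edgeSet \ B.edgeSet with hFdef
    have hnotF : ∀ x y, ¬ B.Adj x y → s(x, y) ∉ F → ¬ G'.Adj x y := by
      intro x y h1 h2 h3
      exact h2 ⟨(SimpleGraph.mem_edgeSet G').mpr h3, fun hB => h1 ((SimpleGraph.mem_edgeSet B).mp hB)⟩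
    have hAdj' : ∀ x y, H.Adj x y → G'.Adj x y := fun x y h => hle' ((hBadj x y).2 (Or.inl h))
    have hAuw : G'.Adj u w := hle' ((hBadj u w).2 (Or.inr (Or.inl ⟨rfl, rfl⟩)))
    have hBn : ∀ x y, ¬ H.Adj x y → ¬(x = u ∧ y = w) → ¬(x = w ∧ y = u) → ¬ B.Adj x y := by
      intro x y hH hp1 hp2 hB
      rcases (hBadj x y).1 hB with h | h | h
      exacts [hH h, hp1 h, hp2 h]
    -- key claim : each k ∈ K \ {f u} forces a fill edge among five candidates
    have key : ∀ k ∈ K, k ≠ f u →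
        s(u, k) ∈ F ∨ s(w, k) ∈ F ∨ s(u, g k) ∈ F ∨ s(w, g k) ∈ F ∨ s(f u, g k) ∈ F := by
      intro k hkK hkfu
      by_contra hcon
      push_neg at hcon
      obtain ⟨h1, h2, h3, h4, h5⟩ := hcon
      have hs0S : g k ∈ S := hgS k hkK
      have hfs0 : f (g k) = k := hfg k hkK
      have hs0u : g k ≠ u := fun h => hkfu (by rw [← hfs0, h])
      have hs0w : g k ≠ w := fun h => hwS (h ▸ hs0S)
      -- adjacencies from the base graph
      have Aufu : G'.Adj u (f u) := hAdj' u (f u) ((hSadj u hu (f u)).2 rfl)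
      have Afuk : G'.Adj (f u) k := hAdj' _ _ (hKcl hfuK hkK (Ne.symm hkfu))
      have Aks0 : G'.Adj k (g k) := (hAdj' (g k) k ((hSadj (g k) hs0S k).2 hfs0.symm)).symm
      -- non-adjacencies
      have Nuk : ¬ G'.Adj u k := by
        refine hnotF u k (hBn u k (fun h => hkfu ((hSadj u hu k).1 h)) ?_ ?_) h1
        · rintro ⟨-, rfl⟩; exact hwK hkK
        · rintro ⟨h, -⟩; exact huw h
      have Nwk : ¬ G'.Adj w k := by
        refine hnotF w k (hBn w k (hw k) ?_ ?_) h2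
        · rintro ⟨h, -⟩; exact huw h.symm
        · rintro ⟨-, h⟩; exact huKne k hkK h.symm
      have Nus0 : ¬ G'.Adj u (g k) := by
        refine hnotF u (g k) (hBn u (g k)
          (fun h => hSKne (g k) hs0S (f u) hfuK ((hSadj u hu (g k)).1 h)) ?_ ?_) h3
        · rintro ⟨-, h⟩; exact hs0w h
        · rintro ⟨h, -⟩; exact huw h
      have Nws0 : ¬ G'.Adj w (g k) := by
        refine hnotF w (g k) (hBn w (g k) (hw (g k)) ?_ ?_) h4
        · rintro ⟨h, -⟩; exact huw h.symm
        · rintro ⟨-, h⟩; exact hs0u h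
      have Nfus0 : ¬ G'.Adj (f u) (g k) := by
        refine hnotF (f u) (g k) (hBn (f u) (g k) ?_ ?_ ?_) h5
        · intro h
          apply hkfu
          have e := (hSadj (g k) hs0S (f u)).1 h.symm
          rw [hfs0] at e
          exact e.symm
        · rintro ⟨h, -⟩; exact huK (h ▸ hfuK)
        · rintro ⟨h, -⟩; exact hwK (h ▸ hfuK)
      -- distinctness
      have dwu : w ≠ u := Ne.symm huw
      have dwfu : w ≠ f u := hwKne _ hfuK
      have dwk : w ≠ k := hwKne _ hkK
      have dws0 : w ≠ g k := hwSne _ hs0S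
      have dufu : u ≠ f u := huKne _ hfuK
      have duk : u ≠ k := huKne _ hkK
      have dus0 : u ≠ g k := Ne.symm hs0u
      have dfuk : f u ≠ k := Ne.symm hkfu
      have dfus0 : f u ≠ g k := Ne.symm (hSKne _ hs0S _ hfuK)
      have dks0 : k ≠ g k := Ne.symm (hSKne _ hs0S _ hkK)
      have h5card : ({w, u, f u, k, g k} : Set α).ncard = 5 :=
        set_ncard_five dwu dwfu dwk dws0 dufu duk dus0 dfuk dfus0 dks0
      have hP2 : IsInducedP4 G' u (f u) k (g k) :=
        ⟨dufu, duk, dus0, dfuk, dfus0, dks0, Aufu, Afuk, Aks0, Nuk, Nus0, Nfus0⟩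
      by_cases hwfu : G'.Adj w (f u)
      · have hP1 : IsInducedP4 G' w (f u) k (g k) :=
          ⟨dwfu, dwk, dws0, dfuk, dfus0, dks0, hwfu, Afuk, Aks0, Nwk, Nws0, Nfus0⟩
        have heq := hsp' {w, u, f u, k, g k} h5card
          {w, f u, k, g k}
          (by intro x hx; simp only [Set.mem_insert_iff, Set.mem_singleton_iff] at hx ⊢; tauto)
          {u, f u, k, g k}
          (by intro x hx; simp only [Set.mem_insert_iff, Set.mem_singleton_iff] at hx ⊢; tauto)
          ⟨w, f u, k, g k, rfl, hP1⟩ ⟨u, f u, k, g k, rfl, hP2⟩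
        have hmem : w ∈ ({u, f u, k, g k} : Set α) := heq ▸ (by simp)
        simp only [Set.mem_insert_iff, Set.mem_singleton_iff] at hmem
        rcases hmem with h | h | h | h
        exacts [dwu h, dwfu h, dwk h, dws0 h]
      · have hP1 : IsInducedP4 G' w u (f u) k :=
          ⟨dwu, dwfu, dwk, dufu, duk, dfuk, hAuw.symm, Aufu, Afuk, hwfu, Nwk, Nuk⟩
        have heq := hsp' {w, u, f u, k, g k} h5card
          {w, u, f u, k}
          (by intro x hx; simp only [Set.mem_insert_iff, Set.mem_singleton_iff] at hx ⊢; tauto)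
          {u, f u, k, g k}
          (by intro x hx; simp only [Set.mem_insert_iff, Set.mem_singleton_iff] at hx ⊢; tauto)
          ⟨w, u, f u, k, rfl, hP1⟩ ⟨u, f u, k, g k, rfl, hP2⟩
        have hmem : w ∈ ({u, f u, k, g k} : Set α) := heq ▸ (by simp)
        simp only [Set.mem_insert_iff, Set.mem_singleton_iff] at hmem
        rcases hmem with h | h | h | h
        exacts [dwu h, dwfu h, dwk h, dws0 h]
    -- the chosen fill edge for each k
    set φ : α → Sym2 α := fun k =>
      if s(u, k) ∈ F then s(u, k)
      else if s(w, k) ∈ F then s(w, k)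
      else if s(u, g k) ∈ F then s(u, g k)
      else if s(w, g k) ∈ F then s(w, g k)
      else s(f u, g k) with hφdef
    have hφmem : ∀ k ∈ K \ {f u}, φ k ∈ F := by
      rintro k ⟨hkK, hkfu⟩
      simp only [hφdef]
      split_ifs with i1 i2 i3 i4
      · exact i1
      · exact i2
      · exact i3
      · exact i4
      · rcases key k hkK hkfu with h | h | h | h | h
        exacts [absurd h i1, absurd h i2, absurd h i3, absurd h i4, h]
    have hφform : ∀ k, ∃ x y, (x = u ∨ x = w ∨ x = f u) ∧ (y = k ∨ y = g k) ∧ φ k = s(x, y) := by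
      intro k
      simp only [hφdef]
      split_ifs with i1 i2 i3 i4
      · exact ⟨u, k, Or.inl rfl, Or.inl rfl, rfl⟩
      · exact ⟨w, k, Or.inr (Or.inl rfl), Or.inl rfl, rfl⟩
      · exact ⟨u, g k, Or.inl rfl, Or.inr rfl, rfl⟩
      · exact ⟨w, g k, Or.inr (Or.inl rfl), Or.inr rfl, rfl⟩
      · exact ⟨f u, g k, Or.inr (Or.inr rfl), Or.inr rfl, rfl⟩
    have hφinj : Set.InjOn φ (K \ {f u}) := by
      rintro k1 hk1 k2 hk2 he
      have hk1K : k1 ∈ K := hk1.1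
      have hk2K : k2 ∈ K := hk2.1
      have hk1fu : ¬ k1 = f u := hk1.2
      have hk2fu : ¬ k2 = f u := hk2.2
      obtain ⟨x1, y1, hx1, hy1, e1⟩ := hφform k1
      obtain ⟨x2, y2, hx2, hy2, e2⟩ := hφform k2
      rw [e1, e2, Sym2.eq_iff] at he
      have hcross : ∀ x y k', (x = u ∨ x = w ∨ x = f u) → k' ∈ K → ¬ k' = f u →
          (y = k' ∨ y = g k') → x ≠ y := by
        intro x y k' hx hkK' hkfu' hy
        rcases hy with rfl | rfl
        · rcases hx with rfl | rfl | rfl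
          · exact huKne _ hkK'
          · exact hwKne _ hkK'
          · exact fun h => hkfu' h.symm
        · rcases hx with rfl | rfl | rfl
          · intro h
            apply hkfu'
            rw [← hfg k' hkK', ← h]
          · intro h
            apply hwS
            rw [h]
            exact hgS k' hkK'
          · exact fun h => hSKne _ (hgS k' hkK') _ hfuK h.symm
      rcases he with ⟨hxx, hyy⟩ | ⟨hxy, hyx⟩
      · rcases hy1 with rfl | rfl <;> rcases hy2 with rfl | rfl
        · exact hyy
        · exact absurd hyy (Ne.symm (hSKne _ (hgS k2 hk2K) _ hk1K))
        · exact absurd hyy (hSKne _ (hgS k1 hk1K) _ hk2K)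
        · rw [← hfg k1 hk1K, ← hfg k2 hk2K, hyy]
      · exact absurd hxy (hcross x1 y2 k2 hx1 hk2K hk2fu hy2)
    have hle2 : (K \ {f u}).ncard ≤ F.ncard :=
      Set.ncard_le_ncard_of_injOn φ hφmem hφinj (Set.toFinite F)
    have heq2 : (K \ {f u}).ncard = K.ncard - 1 := Set.ncard_diff_singleton_of_mem hfuK
    have hgoal : K.ncard - 1 ≤ F.ncard := heq2 ▸ hle2
    exact hgoal
end

section
/- Let H be a thin spider with partition (S, K, R) such that R ≠ ∅ and the subgraph of H induced by R is P4-sparse, let u ∈ S, and let uw be a tail added to H (w ∉ V(H)). Then the minimum number of fill edges (excluding the tail uw) in a P4-sparse completion of H+uw equals |K|. -/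
open SimpleGraph Set

variable {α : Type*}

section MyAux
variable {α : Type*}

lemma myNcard4 [Fintype α] {a b c d : α} (hab : a ≠ b) (hac : a ≠ c) (had : a ≠ d)
    (hbc : b ≠ c) (hbd : b ≠ d) (hcd : c ≠ d) : ({a,b,c,d} : Set α).ncard = 4 := by
  rw [Set.ncard_insert_of_notMem (by simp [hab, hac, had]),
      Set.ncard_insert_of_notMem (by simp [hbc, hbd]), Set.ncard_pair hcd]

lemma myNcard5 [Fintype α] {a b c d e : α} (hab : a ≠ b) (hac : a ≠ c) (had : a ≠ d) (hae : a ≠ e)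
    (hbc : b ≠ c) (hbd : b ≠ d) (hbe : b ≠ e) (hcd : c ≠ d) (hce : c ≠ e) (hde : d ≠ e) :
    ({a,b,c,d,e} : Set α).ncard = 5 := by
  rw [Set.ncard_insert_of_notMem (by simp [hab, hac, had, hae]),
      Set.ncard_insert_of_notMem (by simp [hbc, hbd, hbe]),
      Set.ncard_insert_of_notMem (by simp [hcd, hce]), Set.ncard_pair hde]

lemma mySixSubsetFalse [Fintype α] {a b c d e g : α} {X : Set α}
    (hab : a ≠ b) (hac : a ≠ c) (had : a ≠ d) (hae : a ≠ e) (hag : a ≠ g)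
    (hbc : b ≠ c) (hbd : b ≠ d) (hbe : b ≠ e) (hbg : b ≠ g)
    (hcd : c ≠ d) (hce : c ≠ e) (hcg : c ≠ g) (hde : d ≠ e) (hdg : d ≠ g) (heg : e ≠ g)
    (hsub : ({a,b,c,d,e,g} : Set α) ⊆ X) (hX : X.ncard = 5) : False := by
  have h6 : ({a,b,c,d,e,g} : Set α).ncard = 6 := by
    rw [Set.ncard_insert_of_notMem (by simp [hab, hac, had, hae, hag]),
        Set.ncard_insert_of_notMem (by simp [hbc, hbd, hbe, hbg]),
        Set.ncard_insert_of_notMem (by simp [hcd, hce, hcg]),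
        Set.ncard_insert_of_notMem (by simp [hde, hdg]), Set.ncard_pair heg]
  have := Set.ncard_le_ncard hsub (Set.toFinite X)
  omega

/-- Classification of induced P4s in a thin spider. -/
lemma myP4Classify (H : SimpleGraph α) (S K R : Set α) (f : α → α) (w : α)
    (hSind : IsIndepSetOn H S) (hKcl : H.IsClique K)
    (hRK : ∀ r ∈ R, ∀ k ∈ K, H.Adj r k) (hRS : ∀ r ∈ R, ∀ s ∈ S, ¬ H.Adj r s)
    (hfm : Set.MapsTo f S K) (hadj : ∀ s ∈ S, ∀ k ∈ K, (H.Adj s k ↔ k = f s))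
    (hcover : S ∪ K ∪ R = {w}ᶜ) (hw : ∀ x, ¬ H.Adj w x)
    (a b c d : α) (h : IsInducedP4 H a b c d) :
    (({a,b,c,d} : Set α) ⊆ R) ∨
      ∃ s ∈ S, ∃ t ∈ S, s ≠ t ∧ ({a,b,c,d} : Set α) = {s, f s, f t, t} := by
  have hmem : ∀ x y, H.Adj x y → x ∈ S ∪ K ∪ R := by
    intro x y hxy
    rw [hcover]
    intro hx
    exact hw y (show H.Adj w y from by rwa [Set.mem_singleton_iff.mp hx] at hxy)
  have hNS : ∀ s ∈ S, ∀ x, H.Adj s x → x = f s := by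
    intro s hs x hx
    rcases hmem x s hx.symm with (hxS | hxK) | hxR
    · exact absurd hx (hSind s hs x hxS)
    · exact (hadj s hs x hxK).mp hx
    · exact absurd hx.symm (hRS x hxR s hs)
  have hKR : ∀ x ∈ K, ∀ y, y ∈ K ∪ R → x ≠ y → H.Adj x y := by
    intro x hx y hy hne
    rcases hy with hyK | hyR
    · exact hKcl hx hyK hne
    · exact (hRK y hyR x hx).symm
  obtain ⟨hab, hac, had, hbc, hbd, hcd, e1, e2, e3, n1, n2, n3⟩ := h
  have key : ∀ a b c d : α, IsInducedP4 H a b c d → a ∈ S →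
      ∃ s ∈ S, ∃ t ∈ S, s ≠ t ∧ ({a,b,c,d} : Set α) = {s, f s, f t, t} := by
    intro a b c d h ha
    obtain ⟨hab, hac, had, hbc, hbd, hcd, e1, e2, e3, n1, n2, n3⟩ := h
    have hb : b = f a := hNS a ha b e1
    have hbK : b ∈ K := hb ▸ hfm ha
    have hd : d ∈ S := by
      rcases hmem d c e3.symm with (hdS | hdK) | hdR
      · exact hdS
      · exact absurd (hKcl hbK hdK hbd) n3
      · exact absurd (hRK d hdR b hbK).symm n3
    have hc : c = f d := hNS d hd c e3.symm
    exact ⟨a, ha, d, hd, had, by rw [hb, hc]⟩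
  rcases (em (a ∈ S)) with ha | ha
  · exact Or.inr (key a b c d ⟨hab, hac, had, hbc, hbd, hcd, e1, e2, e3, n1, n2, n3⟩ ha)
  rcases (em (d ∈ S)) with hd | hd
  · obtain ⟨s, hs, t, ht, hst, hset⟩ := key d c b a
      ⟨hcd.symm, hbd.symm, had.symm, hbc.symm, hac.symm, hab.symm,
        e3.symm, e2.symm, e1.symm, fun h => n3 h.symm, fun h => n2 h.symm, fun h => n1 h.symm⟩ hd
    refine Or.inr ⟨s, hs, t, ht, hst, ?_⟩
    rw [← hset]; ext x; simp; tauto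
  rcases (em (b ∈ S)) with hb | hb
  · exact absurd ((hNS b hb a e1.symm).trans (hNS b hb c e2).symm) hac
  rcases (em (c ∈ S)) with hc | hc
  · exact absurd ((hNS c hc b e2.symm).trans (hNS c hc d e3).symm) hbd
  left
  have hKcase : ∀ x ∈ ({a,b,c,d} : Set α), x ∈ K ∪ R := by
    intro x hx
    simp only [Set.mem_insert_iff, Set.mem_singleton_iff] at hx
    rcases hx with rfl | rfl | rfl | rfl
    · rcases hmem x b e1 with (h | h) | h
      exacts [absurd h ha, Or.inl h, Or.inr h]
    · rcases hmem x c e2 with (h | h) | h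
      exacts [absurd h hb, Or.inl h, Or.inr h]
    · rcases hmem x d e3 with (h | h) | h
      exacts [absurd h hc, Or.inl h, Or.inr h]
    · rcases hmem x c e3.symm with (h | h) | h
      exacts [absurd h hd, Or.inl h, Or.inr h]
  intro x hx
  have hx' := hKcase x hx
  rcases hx' with hxK | hxR
  · exfalso
    simp only [Set.mem_insert_iff, Set.mem_singleton_iff] at hx
    rcases hx with rfl | rfl | rfl | rfl
    · exact n1 (hKR x hxK c (hKcase c (by simp)) hac)
    · exact n3 (hKR x hxK d (hKcase d (by simp)) hbd)
    · exact n1 ((hKR x hxK a (hKcase a (by simp)) hac.symm).symm)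
    · exact n2 ((hKR x hxK a (hKcase a (by simp)) had.symm).symm)
  · exact hxR

/-- The optimal completion: make `v0 = f u` universal and add the tail. -/
def spiderCompletion (H : SimpleGraph α) (u w v0 : α) : SimpleGraph α where
  Adj x y := x ≠ y ∧ (x = v0 ∨ y = v0 ∨ H.Adj x y ∨ (x = u ∧ y = w) ∨ (x = w ∧ y = u))
  symm := by
    constructor
    rintro x y ⟨h1, h2⟩
    refine ⟨h1.symm, ?_⟩
    rcases h2 with h | h | h | ⟨rfl, rfl⟩ | ⟨rfl, rfl⟩
    · exact Or.inr (Or.inl h)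
    · exact Or.inl h
    · exact Or.inr (Or.inr (Or.inl h.symm))
    · exact Or.inr (Or.inr (Or.inr (Or.inr ⟨rfl, rfl⟩)))
    · exact Or.inr (Or.inr (Or.inr (Or.inl ⟨rfl, rfl⟩)))
  loopless := ⟨fun x h => h.1 rfl⟩

lemma spiderCompletion_adj (H : SimpleGraph α) (u w v0 x y : α) :
    (spiderCompletion H u w v0).Adj x y ↔
      x ≠ y ∧ (x = v0 ∨ y = v0 ∨ H.Adj x y ∨ (x = u ∧ y = w) ∨ (x = w ∧ y = u)) :=
  Iff.rfl

lemma restrictSet_adj' (H : SimpleGraph α) (R : Set α) (x y : α) :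
    (restrictSet H R).Adj x y ↔ H.Adj x y ∧ x ∈ R ∧ y ∈ R := Iff.rfl

end MyAux

set_option maxHeartbeats 2000000 in
lemma myPart1 [Fintype α]
    (H : SimpleGraph α) (u w : α) (S K R : Set α) (f : α → α)
    (hSind : IsIndepSetOn H S) (hKcl : H.IsClique K)
    (hSKcard : S.ncard = K.ncard) (hK2 : 2 ≤ K.ncard)
    (hdSK : Disjoint S K) (hdSR : Disjoint S R) (hdKR : Disjoint K R)
    (hRK : ∀ r ∈ R, ∀ k ∈ K, H.Adj r k) (hRS : ∀ r ∈ R, ∀ s ∈ S, ¬ H.Adj r s)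
    (hf : Set.BijOn f S K) (hadj : ∀ s ∈ S, ∀ k ∈ K, (H.Adj s k ↔ k = f s))
    (hcover : S ∪ K ∪ R = {w}ᶜ) (hw : ∀ x, ¬ H.Adj w x)
    (hR : R.Nonempty) (hRsparse : IsP4Sparse (restrictSet H R)) (hu : u ∈ S) :
    K.ncard ∈ completionFills IsP4Sparse (addTail H u w) := by
  -- basic facts
  have hwSKR : w ∉ S ∪ K ∪ R := by rw [hcover]; simp
  have hwS : w ∉ S := fun h => hwSKR (Or.inl (Or.inl h))
  have hwK : w ∉ K := fun h => hwSKR (Or.inl (Or.inr h))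
  have hwR : w ∉ R := fun h => hwSKR (Or.inr h)
  have hallmem : ∀ x, x ≠ w → x ∈ S ∪ K ∪ R := fun x hx => by
    rw [hcover]; exact hx
  have hfuK : f u ∈ K := hf.mapsTo hu
  have huw : u ≠ w := fun h => hwS (h ▸ hu)
  have hSnK : ∀ {x}, x ∈ S → x ∉ K := fun {x} hx hk => (Set.disjoint_left.mp hdSK) hx hk
  have hSnR : ∀ {x}, x ∈ S → x ∉ R := fun {x} hx hk => (Set.disjoint_left.mp hdSR) hx hk
  have hKnR : ∀ {x}, x ∈ K → x ∉ R := fun {x} hx hk => (Set.disjoint_left.mp hdKR) hx hk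
  have hfinj : ∀ {x y}, x ∈ S → y ∈ S → f x = f y → x = y := fun {x y} hx hy h => hf.injOn hx hy h
  have hfS : ∀ {x}, x ∈ S → f x ∈ K := fun {x} hx => hf.mapsTo hx
  have hNS : ∀ s ∈ S, ∀ x, H.Adj s x → x = f s := by
    intro s hs x hx
    rcases (by
      rw [hcover]
      exact fun he => hw s (Adj.symm (by rwa [Set.mem_singleton_iff.mp he] at hx)) :
      x ∈ S ∪ K ∪ R) with (hxS | hxK) | hxR
    · exact absurd hx (hSind s hs x hxS)
    · exact (hadj s hs x hxK).mp hx
    · exact absurd hx.symm (hRS x hxR s hs)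
  have hadjufu : H.Adj u (f u) := (hadj u hu (f u) hfuK).mpr rfl
  have hbase : ∀ x y, (addTail H u w).Adj x y ↔
      H.Adj x y ∨ (x = u ∧ y = w) ∨ (x = w ∧ y = u) := by
    intro x y
    simp only [addTail, SimpleGraph.sup_adj, SimpleGraph.fromEdgeSet_adj,
      Set.mem_singleton_iff, Sym2.eq_iff]
    constructor
    · rintro (h | ⟨(⟨rfl, rfl⟩ | ⟨rfl, rfl⟩), hne⟩)
      · exact Or.inl h
      · exact Or.inr (Or.inl ⟨rfl, rfl⟩)
      · exact Or.inr (Or.inr ⟨rfl, rfl⟩)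
    · rintro (h | ⟨rfl, rfl⟩ | ⟨rfl, rfl⟩)
      · exact Or.inl h
      · exact Or.inr ⟨Or.inl ⟨rfl, rfl⟩, huw⟩
      · exact Or.inr ⟨Or.inr ⟨rfl, rfl⟩, huw.symm⟩
  refine ⟨spiderCompletion H u w (f u), ?_, ?_, ?_⟩
  · -- addTail ≤ G'
    intro x y hxy
    refine ⟨hxy.ne, ?_⟩
    rcases (hbase x y).mp hxy with h | h | h
    · exact Or.inr (Or.inr (Or.inl h))
    · exact Or.inr (Or.inr (Or.inr (Or.inl h)))
    · exact Or.inr (Or.inr (Or.inr (Or.inr h)))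
  · -- P4-sparseness of the completion
    have hGadj : ∀ x y, x ≠ u → x ≠ w → x ≠ f u → y ≠ u → y ≠ w → y ≠ f u →
        ((spiderCompletion H u w (f u)).Adj x y ↔ H.Adj x y) := by
      intro x y hxu hxw hxv hyu hyw hyv
      rw [spiderCompletion_adj]
      constructor
      · rintro ⟨hne, (h | h | h | ⟨rfl, rfl⟩ | ⟨rfl, rfl⟩)⟩
        exacts [absurd h hxv, absurd h hyv, h, absurd rfl hxu, absurd rfl hxw]
      · exact fun h => ⟨h.ne, Or.inr (Or.inr (Or.inl h))⟩
    have hNu : ∀ x, (spiderCompletion H u w (f u)).Adj u x → x = f u ∨ x = w := by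
      intro x hx
      obtain ⟨hne, hc⟩ := (spiderCompletion_adj H u w (f u) u x).mp hx
      rcases hc with h | h | h | ⟨_, rfl⟩ | ⟨h', _⟩
      · exact absurd (h ▸ hfuK) (hSnK hu)
      · exact Or.inl h
      · exact Or.inl (hNS u hu x h)
      · exact Or.inr rfl
      · exact absurd h' huw
    have hNw : ∀ x, (spiderCompletion H u w (f u)).Adj w x → x = f u ∨ x = u := by
      intro x hx
      obtain ⟨hne, hc⟩ := (spiderCompletion_adj H u w (f u) w x).mp hx
      rcases hc with h | h | h | ⟨h', _⟩ | ⟨_, rfl⟩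
      · exact absurd (h ▸ hfuK) hwK
      · exact Or.inl h
      · exact absurd h (hw x)
      · exact absurd h' huw.symm
      · exact Or.inr rfl
    have classifyC : ∀ a b c d, IsInducedP4 (spiderCompletion H u w (f u)) a b c d →
        (({a,b,c,d} : Set α) ⊆ R ∧ IsInducedP4 (restrictSet H R) a b c d) ∨
        ∃ s ∈ S, ∃ t ∈ S, s ≠ t ∧ ({a,b,c,d} : Set α) = {s, f s, f t, t} := by
      intro a b c d h
      obtain ⟨hab, hac, had, hbc, hbd, hcd, e1, e2, e3, n1, n2, n3⟩ := h
      have hav : a ≠ f u := fun h => n1 ⟨hac, Or.inl h⟩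
      have hbv : b ≠ f u := fun h => n3 ⟨hbd, Or.inl h⟩
      have hcv : c ≠ f u := fun h => n1 ⟨hac, Or.inr (Or.inl h)⟩
      have hdv : d ≠ f u := fun h => n2 ⟨had, Or.inr (Or.inl h)⟩
      have hbu : b ≠ u := by
        rintro rfl
        rcases hNu a e1.symm with rfl | rfl
        · exact hav rfl
        · rcases hNu c e2 with rfl | rfl
          · exact hcv rfl
          · exact hac rfl
      have hcu : c ≠ u := by
        rintro rfl
        rcases hNu b e2.symm with rfl | rfl
        · exact hbv rfl
        · rcases hNw a e1.symm with rfl | rfl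
          · exact hav rfl
          · exact hac rfl
      have hau : a ≠ u := by
        rintro rfl
        rcases hNu b e1 with rfl | rfl
        · exact hbv rfl
        · rcases hNw c e2 with rfl | rfl
          · exact hcv rfl
          · exact hac rfl
      have hdu : d ≠ u := by
        rintro rfl
        rcases hNu c e3.symm with rfl | rfl
        · exact hcv rfl
        · rcases hNw b e2.symm with rfl | rfl
          · exact hbv rfl
          · exact hbd rfl
      have haw : a ≠ w := by
        rintro rfl
        rcases hNw b e1 with rfl | rfl
        · exact hbv rfl
        · exact hbu rfl
      have hbw : b ≠ w := by
        rintro rfl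
        rcases hNw a e1.symm with rfl | rfl
        · exact hav rfl
        · exact hau rfl
      have hcw : c ≠ w := by
        rintro rfl
        rcases hNw b e2.symm with rfl | rfl
        · exact hbv rfl
        · exact hbu rfl
      have hdw : d ≠ w := by
        rintro rfl
        rcases hNw c e3.symm with rfl | rfl
        · exact hcv rfl
        · exact hcu rfl
      have hP4H : IsInducedP4 H a b c d := by
        refine ⟨hab, hac, had, hbc, hbd, hcd, ?_, ?_, ?_, ?_, ?_, ?_⟩
        · exact (hGadj a b hau haw hav hbu hbw hbv).mp e1
        · exact (hGadj b c hbu hbw hbv hcu hcw hcv).mp e2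
        · exact (hGadj c d hcu hcw hcv hdu hdw hdv).mp e3
        · exact fun h => n1 ((hGadj a c hau haw hav hcu hcw hcv).mpr h)
        · exact fun h => n2 ((hGadj a d hau haw hav hdu hdw hdv).mpr h)
        · exact fun h => n3 ((hGadj b d hbu hbw hbv hdu hdw hdv).mpr h)
      rcases myP4Classify H S K R f w hSind hKcl hRK hRS hf.mapsTo hadj hcover hw
          a b c d hP4H with hsub | hT
      · left
        refine ⟨hsub, ?_⟩
        have haR : a ∈ R := hsub (by simp)
        have hbR : b ∈ R := hsub (by simp)
        have hcR : c ∈ R := hsub (by simp)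
        have hdR : d ∈ R := hsub (by simp)
        obtain ⟨_, _, _, _, _, _, f1, f2, f3, m1, m2, m3⟩ := hP4H
        exact ⟨hab, hac, had, hbc, hbd, hcd, ⟨f1, haR, hbR⟩, ⟨f2, hbR, hcR⟩,
          ⟨f3, hcR, hdR⟩, fun h => m1 h.1, fun h => m2 h.1, fun h => m3 h.1⟩
      · exact Or.inr hT
    -- now the sparseness
    intro X hX t1 ht1 t2 ht2 hp1 hp2
    obtain ⟨a, b, c, d, rfl, h1⟩ := hp1
    obtain ⟨a', b', c', d', rfl, h2⟩ := hp2
    have hd1 := h1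
    have hd2 := h2
    obtain ⟨hab, hac, had, hbc, hbd, hcd, -, -, -, -, -, -⟩ := hd1
    obtain ⟨hab', hac', had', hbc', hbd', hcd', -, -, -, -, -, -⟩ := hd2
    have hsfs : ∀ {x y : α}, x ∈ S → y ∈ S → x ≠ f y := fun {x y} hx hy he =>
      hSnK hx (he ▸ hfS hy)
    -- cardinality clash for mixed R/T case
    have mixed : ∀ t₁ t₂ : Set α, t₁ ⊆ X → t₂ ⊆ X → t₁.ncard = 4 → t₂.ncard = 4 →
        t₁ ⊆ R → (∃ s ∈ S, ∃ t ∈ S, s ≠ t ∧ t₂ = {s, f s, f t, t}) → False := by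
      rintro t₁ t₂ hs1 hs2 hc1 hc2 hsubR ⟨s, hs, t, ht, hst, rfl⟩
      have hint : t₁ ∩ ({s, f s, f t, t} : Set α) = ∅ := by
        ext x
        simp only [Set.mem_inter_iff, Set.mem_empty_iff_false, iff_false, not_and]
        intro hx1 hx2
        have hxR := hsubR hx1
        simp only [Set.mem_insert_iff, Set.mem_singleton_iff] at hx2
        rcases hx2 with rfl | rfl | rfl | rfl
        · exact hSnR hs hxR
        · exact hKnR (hfS hs) hxR
        · exact hKnR (hfS ht) hxR
        · exact hSnR ht hxR
      have h8 := Set.ncard_union_add_ncard_inter t₁ ({s, f s, f t, t} : Set α)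
        (Set.toFinite _) (Set.toFinite _)
      rw [hint] at h8
      have hle5 := Set.ncard_le_ncard (Set.union_subset hs1 hs2) (Set.toFinite X)
      simp only [Set.ncard_empty] at h8
      omega
    rcases classifyC a b c d h1 with ⟨hR1, hr1⟩ | ⟨s, hs, t, ht, hst, hT1⟩ <;>
      rcases classifyC a' b' c' d' h2 with ⟨hR2, hr2⟩ | ⟨s', hs', t', ht', hst', hT2⟩
    · exact hRsparse X hX _ ht1 _ ht2 ⟨a, b, c, d, rfl, hr1⟩ ⟨a', b', c', d', rfl, hr2⟩
    · have hcT : ({a', b', c', d'} : Set α).ncard = 4 := by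
        rw [hT2]
        exact myNcard4 (hsfs hs' hs') (hsfs hs' ht') hst'
          (fun h => hst' (hfinj hs' ht' h)) (hsfs ht' hs').symm (hsfs ht' ht').symm
      exact absurd (mixed _ _ ht1 ht2 (myNcard4 hab hac had hbc hbd hcd) hcT
        hR1 ⟨s', hs', t', ht', hst', hT2⟩) (fun h => h)
    · have hcT : ({a, b, c, d} : Set α).ncard = 4 := by
        rw [hT1]
        exact myNcard4 (hsfs hs hs) (hsfs hs ht) hst
          (fun h => hst (hfinj hs ht h)) (hsfs ht hs).symm (hsfs ht ht).symm
      exact absurd (mixed _ _ ht2 ht1 (myNcard4 hab' hac' had' hbc' hbd' hcd') hcT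
        hR2 ⟨s, hs, t, ht, hst, hT1⟩) (fun h => h)
    · -- both T-type
      rw [hT1, hT2]
      rw [hT1] at ht1
      rw [hT2] at ht2
      by_cases h1' : s' = s ∨ s' = t
      · by_cases h2' : t' = s ∨ t' = t
        · rcases h1' with rfl | rfl <;> rcases h2' with rfl | rfl
          · exact absurd rfl hst'
          · rfl
          · ext x; simp only [Set.mem_insert_iff, Set.mem_singleton_iff]; tauto
          · exact absurd rfl hst'
        · push_neg at h2'
          obtain ⟨h2a, h2b⟩ := h2'
          exact absurd (mySixSubsetFalse (hsfs hs hs) (hsfs hs ht) hst (Ne.symm h2a)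
            (hsfs hs ht') (fun h => hst (hfinj hs ht h)) (hsfs ht hs).symm
            (hsfs ht' hs).symm (fun h => h2a (hfinj ht' hs h.symm))
            (hsfs ht ht).symm (hsfs ht' ht).symm (fun h => h2b (hfinj ht' ht h.symm))
            (Ne.symm h2b) (hsfs ht ht') (hsfs ht' ht')
            (by
              intro x hx
              simp only [Set.mem_insert_iff, Set.mem_singleton_iff] at hx
              rcases hx with rfl | rfl | rfl | rfl | rfl | rfl
              · exact ht1 (by simp)
              · exact ht1 (by simp)
              · exact ht1 (by simp)
              · exact ht1 (by simp)
              · exact ht2 (by simp)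
              · exact ht2 (by simp)) hX) (fun h => h)
      · push_neg at h1'
        obtain ⟨h1a, h1b⟩ := h1'
        exact absurd (mySixSubsetFalse (hsfs hs hs) (hsfs hs ht) hst (Ne.symm h1a)
          (hsfs hs hs') (fun h => hst (hfinj hs ht h)) (hsfs ht hs).symm
          (hsfs hs' hs).symm (fun h => h1a (hfinj hs' hs h.symm))
          (hsfs ht ht).symm (hsfs hs' ht).symm (fun h => h1b (hfinj ht hs' h).symm)
          (Ne.symm h1b) (hsfs ht hs') (hsfs hs' hs')
          (by
            intro x hx
            simp only [Set.mem_insert_iff, Set.mem_singleton_iff] at hx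
            rcases hx with rfl | rfl | rfl | rfl | rfl | rfl
            · exact ht1 (by simp)
            · exact ht1 (by simp)
            · exact ht1 (by simp)
            · exact ht1 (by simp)
            · exact ht2 (by simp)
            · exact ht2 (by simp)) hX) (fun h => h)
  · -- fill count equals K.ncard
    have hFset : (spiderCompletion H u w (f u)).edgeSet \ (addTail H u w).edgeSet =
        (fun x => s(f u, x)) '' ((S \ {u}) ∪ {w}) := by
      apply Set.Subset.antisymm
      · intro q hq
        induction q using Sym2.ind with
        | _ x y =>
          obtain ⟨hqa, hqn⟩ := hq
          have hadjG := (SimpleGraph.mem_edgeSet _).mp hqa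
          have hnb : ¬ (addTail H u w).Adj x y := fun h => hqn ((SimpleGraph.mem_edgeSet _).mpr h)
          obtain ⟨hne, hc⟩ := (spiderCompletion_adj H u w (f u) x y).mp hadjG
          have main : ∀ z, (spiderCompletion H u w (f u)).Adj (f u) z →
              ¬ (addTail H u w).Adj (f u) z → z ∈ (S \ {u}) ∪ {w} := by
            intro z hz hnbz
            by_cases hzw : z = w
            · exact Or.inr hzw
            rcases hallmem z hzw with (hzS | hzK) | hzR
            · refine Or.inl ⟨hzS, ?_⟩
              rintro rfl
              exact hnbz ((hbase _ _).mpr (Or.inl hadjufu.symm))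
            · exact absurd ((hbase _ _).mpr (Or.inl (hKcl hfuK hzK hz.ne))) hnbz
            · exact absurd ((hbase _ _).mpr (Or.inl (hRK z hzR (f u) hfuK).symm)) hnbz
          rcases hc with rfl | rfl | h | ⟨rfl, rfl⟩ | ⟨rfl, rfl⟩
          · exact ⟨y, main y hadjG hnb, rfl⟩
          · exact ⟨x, main x hadjG.symm (fun h => hnb h.symm), Sym2.eq_swap⟩
          · exact absurd ((hbase _ _).mpr (Or.inl h)) hnb
          · exact absurd ((hbase _ _).mpr (Or.inr (Or.inl ⟨rfl, rfl⟩))) hnb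
          · exact absurd ((hbase _ _).mpr (Or.inr (Or.inr ⟨rfl, rfl⟩))) hnb
      · rintro q ⟨x', hx', rfl⟩
        have hx'ne : f u ≠ x' := by
          rcases hx' with ⟨hS, -⟩ | hww
          · exact fun h => hSnK hS (h ▸ hfuK)
          · exact fun h => hwK ((Set.mem_singleton_iff.mp hww) ▸ h ▸ hfuK)
        refine ⟨(SimpleGraph.mem_edgeSet _).mpr ⟨hx'ne, Or.inl rfl⟩, ?_⟩
        intro hb
        have hb' := (SimpleGraph.mem_edgeSet _).mp hb
        rcases (hbase _ _).mp hb' with h | ⟨h1, -⟩ | ⟨h1, -⟩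
        · rcases hx' with ⟨hS, hne⟩ | hww
          · exact hne (hfinj hS hu ((hadj x' hS (f u) hfuK).mp h.symm).symm)
          · rw [Set.mem_singleton_iff.mp hww] at h
            exact hw (f u) h.symm
        · exact hSnK hu (h1 ▸ hfuK)
        · exact hwK (h1 ▸ hfuK)
    show fillCount (addTail H u w) (spiderCompletion H u w (f u)) = K.ncard
    unfold fillCount
    rw [hFset, Set.ncard_image_of_injOn (by
      rintro x hx y hy hxyeq
      rcases Sym2.eq_iff.mp hxyeq with ⟨-, h2⟩ | ⟨h1, h2⟩
      · exact h2
      · exfalso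
        rcases hx with ⟨hS, -⟩ | hww
        · exact hSnK hS (h2 ▸ hfuK)
        · exact hwK ((Set.mem_singleton_iff.mp hww) ▸ h2 ▸ hfuK))]
    rw [Set.union_singleton, Set.ncard_insert_of_notMem (by simp [hwS]),
      Set.ncard_diff_singleton_of_mem hu]
    omega


set_option maxHeartbeats 4000000 in
lemma myPart2 [Fintype α]
    (H : SimpleGraph α) (u w : α) (S K R : Set α) (f : α → α)
    (hSind : IsIndepSetOn H S) (hKcl : H.IsClique K)
    (hSKcard : S.ncard = K.ncard) (hK2 : 2 ≤ K.ncard)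
    (hdSK : Disjoint S K) (hdSR : Disjoint S R) (hdKR : Disjoint K R)
    (hRK : ∀ r ∈ R, ∀ k ∈ K, H.Adj r k) (hRS : ∀ r ∈ R, ∀ s ∈ S, ¬ H.Adj r s)
    (hf : Set.BijOn f S K) (hadj : ∀ s ∈ S, ∀ k ∈ K, (H.Adj s k ↔ k = f s))
    (hcover : S ∪ K ∪ R = {w}ᶜ) (hw : ∀ x, ¬ H.Adj w x)
    (hR : R.Nonempty) (hRsparse : IsP4Sparse (restrictSet H R)) (hu : u ∈ S)
    (G' : SimpleGraph α) (hle : addTail H u w ≤ G') (hsp : IsP4Sparse G') :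
    K.ncard ≤ fillCount (addTail H u w) G' := by
  -- basic facts
  have hwSKR : w ∉ S ∪ K ∪ R := by rw [hcover]; simp
  have hwS : w ∉ S := fun h => hwSKR (Or.inl (Or.inl h))
  have hwK : w ∉ K := fun h => hwSKR (Or.inl (Or.inr h))
  have hwR : w ∉ R := fun h => hwSKR (Or.inr h)
  have hallmem : ∀ x, x ≠ w → x ∈ S ∪ K ∪ R := fun x hx => by
    rw [hcover]; exact hx
  have hfuK : f u ∈ K := hf.mapsTo hu
  have huw : u ≠ w := fun h => hwS (h ▸ hu)
  have hSnK : ∀ {x}, x ∈ S → x ∉ K := fun {x} hx hk => (Set.disjoint_left.mp hdSK) hx hk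
  have hSnR : ∀ {x}, x ∈ S → x ∉ R := fun {x} hx hk => (Set.disjoint_left.mp hdSR) hx hk
  have hKnR : ∀ {x}, x ∈ K → x ∉ R := fun {x} hx hk => (Set.disjoint_left.mp hdKR) hx hk
  have hfinj : ∀ {x y}, x ∈ S → y ∈ S → f x = f y → x = y := fun {x y} hx hy h => hf.injOn hx hy h
  have hfS : ∀ {x}, x ∈ S → f x ∈ K := fun {x} hx => hf.mapsTo hx
  have hNS : ∀ s ∈ S, ∀ x, H.Adj s x → x = f s := by
    intro s hs x hx
    rcases (by
      rw [hcover]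
      exact fun he => hw s (Adj.symm (by rwa [Set.mem_singleton_iff.mp he] at hx)) :
      x ∈ S ∪ K ∪ R) with (hxS | hxK) | hxR
    · exact absurd hx (hSind s hs x hxS)
    · exact (hadj s hs x hxK).mp hx
    · exact absurd hx.symm (hRS x hxR s hs)
  have hadjufu : H.Adj u (f u) := (hadj u hu (f u) hfuK).mpr rfl
  have hbase : ∀ x y, (addTail H u w).Adj x y ↔
      H.Adj x y ∨ (x = u ∧ y = w) ∨ (x = w ∧ y = u) := by
    intro x y
    simp only [addTail, SimpleGraph.sup_adj, SimpleGraph.fromEdgeSet_adj,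
      Set.mem_singleton_iff, Sym2.eq_iff]
    constructor
    · rintro (h | ⟨(⟨rfl, rfl⟩ | ⟨rfl, rfl⟩), hne⟩)
      · exact Or.inl h
      · exact Or.inr (Or.inl ⟨rfl, rfl⟩)
      · exact Or.inr (Or.inr ⟨rfl, rfl⟩)
    · rintro (h | ⟨rfl, rfl⟩ | ⟨rfl, rfl⟩)
      · exact Or.inl h
      · exact Or.inr ⟨Or.inl ⟨rfl, rfl⟩, huw⟩
      · exact Or.inr ⟨Or.inr ⟨rfl, rfl⟩, huw.symm⟩
  by_contra hlt
  push_neg at hlt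
  set F := G'.edgeSet \ (addTail H u w).edgeSet with hFdef
  have hlt' : F.ncard < K.ncard := hlt
  have hGF : ∀ {x y : α}, s(x,y) ∈ F → G'.Adj x y :=
    fun {x y} h => (SimpleGraph.mem_edgeSet _).mp h.1
  have hGn : ∀ x y : α, ¬ (addTail H u w).Adj x y → s(x,y) ∉ F → ¬ G'.Adj x y := by
    intro x y h1 h2 h3
    exact h2 ⟨(SimpleGraph.mem_edgeSet _).mpr h3, fun hb => h1 ((SimpleGraph.mem_edgeSet _).mp hb)⟩
  have hbH : ∀ {x y : α}, H.Adj x y → (addTail H u w).Adj x y := fun {x y} h => (hbase _ _).mpr (Or.inl h)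
  have hbuw : (addTail H u w).Adj u w := (hbase _ _).mpr (Or.inr (Or.inl ⟨rfl, rfl⟩))
  have hnb : ∀ {x y : α}, ¬ H.Adj x y → ¬(x = u ∧ y = w) → ¬(x = w ∧ y = u) →
      ¬ (addTail H u w).Adj x y := by
    intro x y h1 h2 h3 h
    rcases (hbase _ _).mp h with h | h | h
    exacts [h1 h, h2 h, h3 h]
  have hne_sw : ∀ {x}, x ∈ S → x ≠ w := fun {x} hx h => hwS (h ▸ hx)
  have hne_sk : ∀ {x y}, x ∈ S → y ∈ K → x ≠ y := fun {x y} hx hy h => hSnK hx (h ▸ hy)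
  have hne_kw : ∀ {y}, y ∈ K → y ≠ w := fun {y} hy h => hwK (h ▸ hy)
  have hne_fsfu : ∀ {x}, x ∈ S → x ≠ u → f x ≠ f u := fun {x} hx hxu h => hxu (hfinj hx hu h)
  have hB_su : ∀ {x}, x ∈ S → ¬ (addTail H u w).Adj x u := fun {x} hx =>
    hnb (hSind x hx u hu) (fun h => huw h.2) (fun h => hwS (h.1 ▸ hx))
  have hB_sw : ∀ {x}, x ∈ S → x ≠ u → ¬ (addTail H u w).Adj x w := fun {x} hx hxu =>
    hnb (fun h => hw x h.symm) (fun h => hxu h.1) (fun h => hwS (h.1 ▸ hx))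
  have hB_sfu : ∀ {x}, x ∈ S → x ≠ u → ¬ (addTail H u w).Adj x (f u) := fun {x} hx hxu =>
    hnb (fun h => hxu (hfinj hu hx ((hadj x hx (f u) hfuK).mp h)).symm)
      (fun h => hxu h.1) (fun h => hwS (h.1 ▸ hx))
  have hB_fsu : ∀ {x}, x ∈ S → x ≠ u → ¬ (addTail H u w).Adj (f x) u := fun {x} hx hxu =>
    hnb (fun h => hxu (hfinj hx hu (hNS u hu (f x) h.symm)))
      (fun h => huw h.2) (fun h => hwK (h.1 ▸ hfS hx))
  have hB_fsw : ∀ {x}, x ∈ S → ¬ (addTail H u w).Adj (f x) w := fun {x} hx =>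
    hnb (fun h => hw (f x) h.symm) (fun h => hSnK hu (h.1 ▸ hfS hx))
      (fun h => hwK (h.1 ▸ hfS hx))
  have hB_fuw : ¬ (addTail H u w).Adj (f u) w :=
    hnb (fun h => hw (f u) h.symm) (fun h => hSnK hu (h.1 ▸ hfuK)) (fun h => hwK (h.1 ▸ hfuK))
  have hB_ur : ∀ {r}, r ∈ R → ¬ (addTail H u w).Adj u r := fun {r} hr =>
    hnb (fun h => hRS r hr u hu h.symm) (fun h => hwR (h.2 ▸ hr)) (fun h => huw h.1)
  have hB_wr : ∀ {r}, r ∈ R → ¬ (addTail H u w).Adj w r := fun {r} hr =>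
    hnb (hw r) (fun h => huw h.1.symm) (fun h => hSnR hu (h.2 ▸ hr))
  have hBa_sfs : ∀ {x}, x ∈ S → (addTail H u w).Adj x (f x) := fun {x} hx =>
    hbH ((hadj x hx (f x) (hfS hx)).mpr rfl)
  have hBa_fsfu : ∀ {x}, x ∈ S → x ≠ u → (addTail H u w).Adj (f x) (f u) := fun {x} hx hxu =>
    hbH (hKcl (hfS hx) hfuK (hne_fsfu hx hxu))
  have hBa_fuu : (addTail H u w).Adj (f u) u := hbH hadjufu.symm
  have hBa_fur : ∀ {r}, r ∈ R → (addTail H u w).Adj (f u) r := fun {r} hr =>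
    hbH (hRK r hr (f u) hfuK).symm
  have hBa_fsr : ∀ {x r}, x ∈ S → r ∈ R → (addTail H u w).Adj (f x) r := fun {x r} hx hr =>
    hbH (hRK r hr (f x) (hfS hx)).symm
  have hX5 : ∀ {x}, x ∈ S → x ≠ u → ({x, f x, f u, u, w} : Set α).ncard = 5 := fun {x} hx hxu =>
    myNcard5 (hne_sk hx (hfS hx)) (hne_sk hx hfuK) hxu (hne_sw hx)
      (hne_fsfu hx hxu) (hne_sk hu (hfS hx)).symm (hne_kw (hfS hx))
      (hne_sk hu hfuK).symm (hne_kw hfuK) huw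
  -- Step 1: each leg besides u forces a fill edge near it
  have step1 : ∀ x, x ∈ S → x ≠ u → ∃ p ∈ F,
      (x ∈ p ∨ f x ∈ p) ∧ ∀ z ∈ p, z ∈ ({x, f x, f u, u, w} : Set α) := by
    intro x hx hxu
    by_contra hcon
    push_neg at hcon
    have hnF : ∀ y z : α, (x = y ∨ x = z ∨ f x = y ∨ f x = z) →
        y ∈ ({x, f x, f u, u, w} : Set α) → z ∈ ({x, f x, f u, u, w} : Set α) →
        s(y,z) ∉ F := by
      intro y z htouch hy hz hp
      obtain ⟨e, he, hne⟩ := hcon _ hp (by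
        rcases htouch with h | h | h | h
        · exact Or.inl (Sym2.mem_iff.mpr (Or.inl h))
        · exact Or.inl (Sym2.mem_iff.mpr (Or.inr h))
        · exact Or.inr (Sym2.mem_iff.mpr (Or.inl h))
        · exact Or.inr (Sym2.mem_iff.mpr (Or.inr h)))
      rcases Sym2.mem_iff.mp he with rfl | rfl
      exacts [hne hy, hne hz]
    have hn_sfu : ¬ G'.Adj x (f u) :=
      hGn _ _ (hB_sfu hx hxu) (hnF _ _ (Or.inl rfl) (by simp) (by simp))
    have hn_su : ¬ G'.Adj x u :=
      hGn _ _ (hB_su hx) (hnF _ _ (Or.inl rfl) (by simp) (by simp))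
    have hn_sw : ¬ G'.Adj x w :=
      hGn _ _ (hB_sw hx hxu) (hnF _ _ (Or.inl rfl) (by simp) (by simp))
    have hn_fsu : ¬ G'.Adj (f x) u :=
      hGn _ _ (hB_fsu hx hxu) (hnF _ _ (Or.inr (Or.inr (Or.inl rfl))) (by simp) (by simp))
    have hn_fsw : ¬ G'.Adj (f x) w :=
      hGn _ _ (hB_fsw hx) (hnF _ _ (Or.inr (Or.inr (Or.inl rfl))) (by simp) (by simp))
    have hq1 : IsInducedP4 G' x (f x) (f u) u :=
      ⟨hne_sk hx (hfS hx), hne_sk hx hfuK, hxu, hne_fsfu hx hxu,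
        (hne_sk hu (hfS hx)).symm, (hne_sk hu hfuK).symm,
        hle (hBa_sfs hx), hle (hBa_fsfu hx hxu), hle hBa_fuu, hn_sfu, hn_su, hn_fsu⟩
    by_cases hfw : s(f u, w) ∈ F
    · have hq2 : IsInducedP4 G' x (f x) (f u) w :=
        ⟨hne_sk hx (hfS hx), hne_sk hx hfuK, hne_sw hx, hne_fsfu hx hxu,
          hne_kw (hfS hx), hne_kw hfuK,
          hle (hBa_sfs hx), hle (hBa_fsfu hx hxu), hGF hfw, hn_sfu, hn_sw, hn_fsw⟩
      have heq := hsp ({x, f x, f u, u, w} : Set α) (hX5 hx hxu)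
        {x, f x, f u, u} (by intro z hz; simp only [Set.mem_insert_iff, Set.mem_singleton_iff] at hz ⊢; tauto)
        {x, f x, f u, w} (by intro z hz; simp only [Set.mem_insert_iff, Set.mem_singleton_iff] at hz ⊢; tauto)
        ⟨x, f x, f u, u, rfl, hq1⟩ ⟨x, f x, f u, w, rfl, hq2⟩
      have hmem : u ∈ ({x, f x, f u, w} : Set α) :=
        by rw [← heq]; simp
      simp only [Set.mem_insert_iff, Set.mem_singleton_iff] at hmem
      rcases hmem with h | h | h | h
      · exact hxu h.symm
      · exact hSnK hu (h ▸ hfS hx)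
      · exact hSnK hu (h ▸ hfuK)
      · exact huw h
    · have hn_fuw : ¬ G'.Adj (f u) w := hGn _ _ hB_fuw hfw
      have hq2 : IsInducedP4 G' (f x) (f u) u w :=
        ⟨hne_fsfu hx hxu, (hne_sk hu (hfS hx)).symm, hne_kw (hfS hx),
          (hne_sk hu hfuK).symm, hne_kw hfuK, huw,
          hle (hBa_fsfu hx hxu), hle hBa_fuu, hle hbuw, hn_fsu, hn_fsw, hn_fuw⟩
      have heq := hsp ({x, f x, f u, u, w} : Set α) (hX5 hx hxu)
        {x, f x, f u, u} (by intro z hz; simp only [Set.mem_insert_iff, Set.mem_singleton_iff] at hz ⊢; tauto)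
        {f x, f u, u, w} (by intro z hz; simp only [Set.mem_insert_iff, Set.mem_singleton_iff] at hz ⊢; tauto)
        ⟨x, f x, f u, u, rfl, hq1⟩ ⟨f x, f u, u, w, rfl, hq2⟩
      have hmem : x ∈ ({f x, f u, u, w} : Set α) :=
        by rw [← heq]; simp
      simp only [Set.mem_insert_iff, Set.mem_singleton_iff] at hmem
      rcases hmem with h | h | h | h
      · exact hne_sk hx (hfS hx) h
      · exact hne_sk hx hfuK h
      · exact hxu h
      · exact hne_sw hx h
  have step1' : ∀ x : α, ∃ p : Sym2 α, x ∈ S → x ≠ u → p ∈ F ∧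
      (x ∈ p ∨ f x ∈ p) ∧ ∀ z ∈ p, z ∈ ({x, f x, f u, u, w} : Set α) := by
    intro x
    by_cases h : x ∈ S ∧ x ≠ u
    · obtain ⟨p, h1, h2⟩ := step1 x h.1 h.2
      exact ⟨p, fun _ _ => ⟨h1, h2⟩⟩
    · exact ⟨s(u, u), fun h1 h2 => absurd ⟨h1, h2⟩ h⟩
  choose g hg using step1'
  have huniq : ∀ x t : α, x ∈ S → x ≠ u → t ∈ S → t ≠ u →
      (t ∈ g x ∨ f t ∈ g x) → t = x := by
    intro x t hx hxu ht htu hPt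
    have hPs := ((hg x) hx hxu).2.2
    rcases hPt with hm | hm
    · have h5 := hPs t hm
      simp only [Set.mem_insert_iff, Set.mem_singleton_iff] at h5
      rcases h5 with h | h | h | h | h
      · exact h
      · exact (hSnK (h ▸ ht) (hfS hx)).elim
      · exact (hSnK (h ▸ ht) hfuK).elim
      · exact absurd h htu
      · exact absurd (h ▸ ht) hwS
    · have h5 := hPs (f t) hm
      simp only [Set.mem_insert_iff, Set.mem_singleton_iff] at h5
      rcases h5 with h | h | h | h | h
      · exact absurd (h ▸ hfS ht) (hSnK hx)
      · exact hfinj ht hx h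
      · exact absurd (hfinj ht hu h) htu
      · exact absurd (h ▸ hfS ht) (hSnK hu)
      · exact absurd (h ▸ hfS ht) hwK
  have hinj : Set.InjOn g (S \ {u}) := by
    rintro x hx y hy hxy
    simp only [Set.mem_diff, Set.mem_singleton_iff] at hx hy
    have hPy := ((hg y) hy.1 hy.2).2.1
    rw [← hxy] at hPy
    exact (huniq x y hx.1 hx.2 hy.1 hy.2 hPy).symm
  have himg : g '' (S \ {u}) ⊆ F := by
    rintro p ⟨x, hx, rfl⟩
    simp only [Set.mem_diff, Set.mem_singleton_iff] at hx
    exact ((hg x) hx.1 hx.2).1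
  have hSdiff : (S \ {u}).ncard = K.ncard - 1 := by
    rw [Set.ncard_diff_singleton_of_mem hu]; omega
  have hFim : g '' (S \ {u}) = F := by
    refine Set.eq_of_subset_of_ncard_le himg ?_ (Set.toFinite F)
    rw [Set.ncard_image_of_injOn hinj, hSdiff]
    omega
  have hFP : ∀ p ∈ F, ∃ t, t ∈ S ∧ t ≠ u ∧ g t = p := by
    intro p hp
    rw [← hFim] at hp
    obtain ⟨t, ht, rfl⟩ := hp
    simp only [Set.mem_diff, Set.mem_singleton_iff] at ht
    exact ⟨t, ht.1, ht.2, rfl⟩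
  have hSne : (S \ {u}).Nonempty := Set.nonempty_of_ncard_ne_zero (by rw [hSdiff]; omega)
  obtain ⟨s, hsd⟩ := hSne
  simp only [Set.mem_diff, Set.mem_singleton_iff] at hsd
  obtain ⟨hs, hsu⟩ := hsd
  obtain ⟨r, hr⟩ := hR
  obtain ⟨hqF, hqT, hqX⟩ := (hg s) hs hsu
  have hFmem : ∀ y z : α, s(y,z) ∈ F → ∃ t, t ∈ S ∧ t ≠ u ∧ g t = s(y,z) ∧
      ((t = y ∨ t = z) ∨ (f t = y ∨ f t = z)) ∧
      y ∈ ({t, f t, f u, u, w} : Set α) ∧ z ∈ ({t, f t, f u, u, w} : Set α) := by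
    intro y z hp
    obtain ⟨t, ht, htu, hgt⟩ := hFP _ hp
    obtain ⟨-, hT, hX⟩ := (hg t) ht htu
    rw [hgt] at hT hX
    refine ⟨t, ht, htu, hgt, ?_, hX y (Sym2.mem_iff.mpr (Or.inl rfl)),
      hX z (Sym2.mem_iff.mpr (Or.inr rfl))⟩
    rcases hT with hm | hm
    · exact Or.inl (Sym2.mem_iff.mp hm)
    · exact Or.inr (Sym2.mem_iff.mp hm)
  have hF_nr : ∀ y : α, s(y, r) ∉ F := by
    intro y hp
    obtain ⟨t, ht, htu, -, -, -, hzX⟩ := hFmem y r hp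
    simp only [Set.mem_insert_iff, Set.mem_singleton_iff] at hzX
    rcases hzX with h | h | h | h | h
    · exact hSnR ht (h ▸ hr)
    · exact hKnR (hfS ht) (h ▸ hr)
    · exact hKnR hfuK (h ▸ hr)
    · exact hSnR hu (h ▸ hr)
    · exact hwR (h ▸ hr)
  have hF_fuw : s(f u, w) ∉ F := by
    intro hp
    obtain ⟨t, ht, htu, -, hT, -, -⟩ := hFmem (f u) w hp
    rcases hT with (h | h) | (h | h)
    · exact hSnK ht (h.symm ▸ hfuK)
    · exact hwS (h ▸ ht)
    · exact htu (hfinj ht hu h)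
    · exact hwK (h ▸ hfS ht)
  have hforce : ∀ y z : α, s(y, z) ∈ F → (y = s ∨ y = f s) → (z = f u ∨ z = u ∨ z = w) →
      g s = s(y, z) := by
    intro y z hp hy hz
    obtain ⟨t, ht, htu, hgt, hT, -, -⟩ := hFmem y z hp
    have hts : t = s := by
      rcases hT with (h1 | h1) | (h1 | h1)
      · rcases hy with rfl | rfl
        · exact h1
        · exact absurd (h1.symm ▸ hfS hs) (hSnK ht)
      · rcases hz with rfl | rfl | rfl
        · exact absurd (h1.symm ▸ hfuK) (hSnK ht)
        · exact absurd h1 htu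
        · exact absurd (h1 ▸ ht) hwS
      · rcases hy with rfl | rfl
        · exact absurd (h1 ▸ hfS ht) (hSnK hs)
        · exact hfinj ht hs h1
      · rcases hz with rfl | rfl | rfl
        · exact absurd (hfinj ht hu h1) htu
        · exact absurd (h1 ▸ hfS ht) (hSnK hu)
        · exact absurd (h1 ▸ hfS ht) hwK
    rw [hts] at hgt
    exact hgt
  have hnotF : ∀ y z : α, (y = s ∨ y = f s) → (z = f u ∨ z = u ∨ z = w) →
      g s ≠ s(y, z) → s(y, z) ∉ F :=
    fun y z hy hz hne hp => hne (hforce y z hp hy hz)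
  have d_sfs : s ≠ f s := hne_sk hs (hfS hs)
  have d_sfu : s ≠ f u := hne_sk hs hfuK
  have d_sw : s ≠ w := hne_sw hs
  have d_fsfu : f s ≠ f u := hne_fsfu hs hsu
  have d_fsu : f s ≠ u := (hne_sk hu (hfS hs)).symm
  have d_fsw : f s ≠ w := hne_kw (hfS hs)
  have d_fuu : f u ≠ u := (hne_sk hu hfuK).symm
  have d_fuw : f u ≠ w := hne_kw hfuK
  have d_wr : w ≠ r := fun h => hwR (h.symm ▸ hr)
  have d_ur : u ≠ r := fun h => hSnR hu (h.symm ▸ hr)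
  have d_fur : f u ≠ r := fun h => hKnR hfuK (h.symm ▸ hr)
  have d_fsr : f s ≠ r := fun h => hKnR (hfS hs) (h.symm ▸ hr)
  have n_fuw : ¬ G'.Adj (f u) w := hGn _ _ hB_fuw hF_fuw
  have n_wfu : ¬ G'.Adj w (f u) := fun h => n_fuw h.symm
  have n_ur : ¬ G'.Adj u r := hGn _ _ (hB_ur hr) (hF_nr u)
  have n_wr : ¬ G'.Adj w r := hGn _ _ (hB_wr hr) (hF_nr w)
  have subtac : ∀ z : α, True := fun _ => trivial
  have SC1 : g s = s(s, f u) → False := by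
    intro hQ
    have aG : G'.Adj s (f u) := hGF (hQ ▸ hqF)
    have nF_su : s(s, u) ∉ F := hnotF s u (Or.inl rfl) (Or.inr (Or.inl rfl)) (by
      rw [hQ]; intro heq
      rcases Sym2.eq_iff.mp heq with ⟨h1, h2⟩ | ⟨h1, h2⟩
      · exact d_fuu h2
      · exact hsu h1)
    have nF_sw : s(s, w) ∉ F := hnotF s w (Or.inl rfl) (Or.inr (Or.inr rfl)) (by
      rw [hQ]; intro heq
      rcases Sym2.eq_iff.mp heq with ⟨h1, h2⟩ | ⟨h1, h2⟩
      · exact d_fuw h2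
      · exact d_sw h1)
    have nF_fsu : s(f s, u) ∉ F := hnotF (f s) u (Or.inr rfl) (Or.inr (Or.inl rfl)) (by
      rw [hQ]; intro heq
      rcases Sym2.eq_iff.mp heq with ⟨h1, h2⟩ | ⟨h1, h2⟩
      · exact d_sfs h1
      · exact hsu h1)
    have nF_fsw : s(f s, w) ∉ F := hnotF (f s) w (Or.inr rfl) (Or.inr (Or.inr rfl)) (by
      rw [hQ]; intro heq
      rcases Sym2.eq_iff.mp heq with ⟨h1, h2⟩ | ⟨h1, h2⟩
      · exact d_sfs h1
      · exact d_sw h1)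
    have n_su : ¬ G'.Adj s u := hGn _ _ (hB_su hs) nF_su
    have n_sw : ¬ G'.Adj s w := hGn _ _ (hB_sw hs hsu) nF_sw
    have n_fsu : ¬ G'.Adj (f s) u := hGn _ _ (hB_fsu hs hsu) nF_fsu
    have n_fsw : ¬ G'.Adj (f s) w := hGn _ _ (hB_fsw hs) nF_fsw
    have hq1 : IsInducedP4 G' s (f u) u w :=
      ⟨d_sfu, hsu, d_sw, d_fuu, d_fuw, huw, aG, hle hBa_fuu, hle hbuw, n_su, n_sw, n_fuw⟩
    have hq2 : IsInducedP4 G' (f s) (f u) u w :=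
      ⟨d_fsfu, d_fsu, d_fsw, d_fuu, d_fuw, huw, hle (hBa_fsfu hs hsu), hle hBa_fuu,
        hle hbuw, n_fsu, n_fsw, n_fuw⟩
    have heq := hsp ({s, f s, f u, u, w} : Set α) (hX5 hs hsu)
      {s, f u, u, w} (by intro z hz; simp only [Set.mem_insert_iff, Set.mem_singleton_iff] at hz ⊢; tauto)
      {f s, f u, u, w} (by intro z hz; simp only [Set.mem_insert_iff, Set.mem_singleton_iff] at hz ⊢; tauto)
      ⟨s, f u, u, w, rfl, hq1⟩ ⟨f s, f u, u, w, rfl, hq2⟩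
    have hmem : s ∈ ({f s, f u, u, w} : Set α) :=
      by rw [← heq]; simp
    simp only [Set.mem_insert_iff, Set.mem_singleton_iff] at hmem
    rcases hmem with h | h | h | h
    exacts [d_sfs h, d_sfu h, hsu h, d_sw h]
  have SC2 : g s = s(s, u) → False := by
    intro hQ
    have aG : G'.Adj s u := hGF (hQ ▸ hqF)
    have nF_fsu : s(f s, u) ∉ F := hnotF (f s) u (Or.inr rfl) (Or.inr (Or.inl rfl)) (by
      rw [hQ]; intro heq
      rcases Sym2.eq_iff.mp heq with ⟨h1, h2⟩ | ⟨h1, h2⟩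
      · exact d_sfs h1
      · exact hsu h1)
    have nF_fsw : s(f s, w) ∉ F := hnotF (f s) w (Or.inr rfl) (Or.inr (Or.inr rfl)) (by
      rw [hQ]; intro heq
      rcases Sym2.eq_iff.mp heq with ⟨h1, h2⟩ | ⟨h1, h2⟩
      · exact huw h2
      · exact d_sw h1)
    have nF_sw : s(s, w) ∉ F := hnotF s w (Or.inl rfl) (Or.inr (Or.inr rfl)) (by
      rw [hQ]; intro heq
      rcases Sym2.eq_iff.mp heq with ⟨h1, h2⟩ | ⟨h1, h2⟩
      · exact huw h2
      · exact d_sw h1)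
    have n_sw : ¬ G'.Adj s w := hGn _ _ (hB_sw hs hsu) nF_sw
    have n_fsu : ¬ G'.Adj (f s) u := hGn _ _ (hB_fsu hs hsu) nF_fsu
    have n_fsw : ¬ G'.Adj (f s) w := hGn _ _ (hB_fsw hs) nF_fsw
    have hq1 : IsInducedP4 G' (f s) s u w :=
      ⟨d_sfs.symm, d_fsu, d_fsw, hsu, d_sw, huw, (hle (hBa_sfs hs)).symm, aG, hle hbuw,
        n_fsu, n_fsw, n_sw⟩
    have hq2 : IsInducedP4 G' (f s) (f u) u w :=
      ⟨d_fsfu, d_fsu, d_fsw, d_fuu, d_fuw, huw, hle (hBa_fsfu hs hsu), hle hBa_fuu,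
        hle hbuw, n_fsu, n_fsw, n_fuw⟩
    have heq := hsp ({s, f s, f u, u, w} : Set α) (hX5 hs hsu)
      {f s, s, u, w} (by intro z hz; simp only [Set.mem_insert_iff, Set.mem_singleton_iff] at hz ⊢; tauto)
      {f s, f u, u, w} (by intro z hz; simp only [Set.mem_insert_iff, Set.mem_singleton_iff] at hz ⊢; tauto)
      ⟨f s, s, u, w, rfl, hq1⟩ ⟨f s, f u, u, w, rfl, hq2⟩
    have hmem : s ∈ ({f s, f u, u, w} : Set α) :=
      by rw [← heq]; simp
    simp only [Set.mem_insert_iff, Set.mem_singleton_iff] at hmem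
    rcases hmem with h | h | h | h
    exacts [d_sfs h, d_sfu h, hsu h, d_sw h]
  have SC3 : g s = s(s, w) → False := by
    intro hQ
    have aG : G'.Adj s w := hGF (hQ ▸ hqF)
    have nF_sfu : s(s, f u) ∉ F := hnotF s (f u) (Or.inl rfl) (Or.inl rfl) (by
      rw [hQ]; intro heq
      rcases Sym2.eq_iff.mp heq with ⟨h1, h2⟩ | ⟨h1, h2⟩
      · exact d_fuw h2.symm
      · exact d_sfu h1)
    have nF_su : s(s, u) ∉ F := hnotF s u (Or.inl rfl) (Or.inr (Or.inl rfl)) (by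
      rw [hQ]; intro heq
      rcases Sym2.eq_iff.mp heq with ⟨h1, h2⟩ | ⟨h1, h2⟩
      · exact huw h2.symm
      · exact hsu h1)
    have nF_fsu : s(f s, u) ∉ F := hnotF (f s) u (Or.inr rfl) (Or.inr (Or.inl rfl)) (by
      rw [hQ]; intro heq
      rcases Sym2.eq_iff.mp heq with ⟨h1, h2⟩ | ⟨h1, h2⟩
      · exact d_sfs h1
      · exact hsu h1)
    have nF_fsw : s(f s, w) ∉ F := hnotF (f s) w (Or.inr rfl) (Or.inr (Or.inr rfl)) (by
      rw [hQ]; intro heq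
      rcases Sym2.eq_iff.mp heq with ⟨h1, h2⟩ | ⟨h1, h2⟩
      · exact d_sfs h1
      · exact d_sw h1)
    have n_sfu : ¬ G'.Adj s (f u) := hGn _ _ (hB_sfu hs hsu) nF_sfu
    have n_su : ¬ G'.Adj s u := hGn _ _ (hB_su hs) nF_su
    have n_fsu : ¬ G'.Adj (f s) u := hGn _ _ (hB_fsu hs hsu) nF_fsu
    have n_fsw : ¬ G'.Adj (f s) w := hGn _ _ (hB_fsw hs) nF_fsw
    have hq1 : IsInducedP4 G' s (f s) (f u) u :=
      ⟨d_sfs, d_sfu, hsu, d_fsfu, d_fsu, d_fuu, hle (hBa_sfs hs), hle (hBa_fsfu hs hsu),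
        hle hBa_fuu, n_sfu, n_su, n_fsu⟩
    have hq2 : IsInducedP4 G' (f s) s w u :=
      ⟨d_sfs.symm, d_fsw, d_fsu, d_sw, hsu, huw.symm, (hle (hBa_sfs hs)).symm, aG,
        (hle hbuw).symm, n_fsw, n_fsu, n_su⟩
    have heq := hsp ({s, f s, f u, u, w} : Set α) (hX5 hs hsu)
      {s, f s, f u, u} (by intro z hz; simp only [Set.mem_insert_iff, Set.mem_singleton_iff] at hz ⊢; tauto)
      {f s, s, w, u} (by intro z hz; simp only [Set.mem_insert_iff, Set.mem_singleton_iff] at hz ⊢; tauto)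
      ⟨s, f s, f u, u, rfl, hq1⟩ ⟨f s, s, w, u, rfl, hq2⟩
    have hmem : f u ∈ ({f s, s, w, u} : Set α) :=
      by rw [← heq]; simp
    simp only [Set.mem_insert_iff, Set.mem_singleton_iff] at hmem
    rcases hmem with h | h | h | h
    exacts [d_fsfu h.symm, d_sfu h.symm, d_fuw h, d_fuu h]
  have SC4 : g s = s(f s, u) → False := by
    intro hQ
    have aG : G'.Adj (f s) u := hGF (hQ ▸ hqF)
    have nF_fsw : s(f s, w) ∉ F := hnotF (f s) w (Or.inr rfl) (Or.inr (Or.inr rfl)) (by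
      rw [hQ]; intro heq
      rcases Sym2.eq_iff.mp heq with ⟨h1, h2⟩ | ⟨h1, h2⟩
      · exact huw h2
      · exact d_fsw h1)
    have n_wfs : ¬ G'.Adj w (f s) := fun h => (hGn _ _ (hB_fsw hs) nF_fsw) h.symm
    have hQ5 : ({w, u, f u, f s, r} : Set α).ncard = 5 :=
      myNcard5 huw.symm d_fuw.symm d_fsw.symm d_wr (hne_sk hu hfuK) (hne_sk hu (hfS hs))
        d_ur d_fsfu.symm d_fur d_fsr
    have hq1 : IsInducedP4 G' w u (f u) r :=
      ⟨huw.symm, d_fuw.symm, d_wr, hne_sk hu hfuK, d_ur, d_fur, (hle hbuw).symm,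
        (hle hBa_fuu).symm, hle (hBa_fur hr), n_wfu, n_wr, n_ur⟩
    have hq2 : IsInducedP4 G' w u (f s) r :=
      ⟨huw.symm, d_fsw.symm, d_wr, hne_sk hu (hfS hs), d_ur, d_fsr, (hle hbuw).symm,
        aG.symm, hle (hBa_fsr hs hr), n_wfs, n_wr, n_ur⟩
    have heq := hsp ({w, u, f u, f s, r} : Set α) hQ5
      {w, u, f u, r} (by intro z hz; simp only [Set.mem_insert_iff, Set.mem_singleton_iff] at hz ⊢; tauto)
      {w, u, f s, r} (by intro z hz; simp only [Set.mem_insert_iff, Set.mem_singleton_iff] at hz ⊢; tauto)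
      ⟨w, u, f u, r, rfl, hq1⟩ ⟨w, u, f s, r, rfl, hq2⟩
    have hmem : f u ∈ ({w, u, f s, r} : Set α) :=
      by rw [← heq]; simp
    simp only [Set.mem_insert_iff, Set.mem_singleton_iff] at hmem
    rcases hmem with h | h | h | h
    exacts [d_fuw h, d_fuu h, d_fsfu h.symm, d_fur h]
  have SC5 : g s = s(f s, w) → False := by
    intro hQ
    have aG : G'.Adj (f s) w := hGF (hQ ▸ hqF)
    have nF_sfu : s(s, f u) ∉ F := hnotF s (f u) (Or.inl rfl) (Or.inl rfl) (by
      rw [hQ]; intro heq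
      rcases Sym2.eq_iff.mp heq with ⟨h1, h2⟩ | ⟨h1, h2⟩
      · exact d_sfs h1.symm
      · exact d_fsfu h1)
    have nF_su : s(s, u) ∉ F := hnotF s u (Or.inl rfl) (Or.inr (Or.inl rfl)) (by
      rw [hQ]; intro heq
      rcases Sym2.eq_iff.mp heq with ⟨h1, h2⟩ | ⟨h1, h2⟩
      · exact d_sfs h1.symm
      · exact d_fsu h1)
    have nF_sw : s(s, w) ∉ F := hnotF s w (Or.inl rfl) (Or.inr (Or.inr rfl)) (by
      rw [hQ]; intro heq
      rcases Sym2.eq_iff.mp heq with ⟨h1, h2⟩ | ⟨h1, h2⟩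
      · exact d_sfs h1.symm
      · exact d_fsw h1)
    have nF_fsu : s(f s, u) ∉ F := hnotF (f s) u (Or.inr rfl) (Or.inr (Or.inl rfl)) (by
      rw [hQ]; intro heq
      rcases Sym2.eq_iff.mp heq with ⟨h1, h2⟩ | ⟨h1, h2⟩
      · exact huw h2.symm
      · exact d_fsu h1)
    have n_sfu : ¬ G'.Adj s (f u) := hGn _ _ (hB_sfu hs hsu) nF_sfu
    have n_su : ¬ G'.Adj s u := hGn _ _ (hB_su hs) nF_su
    have n_sw : ¬ G'.Adj s w := hGn _ _ (hB_sw hs hsu) nF_sw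
    have n_fsu : ¬ G'.Adj (f s) u := hGn _ _ (hB_fsu hs hsu) nF_fsu
    have hq1 : IsInducedP4 G' s (f s) (f u) u :=
      ⟨d_sfs, d_sfu, hsu, d_fsfu, d_fsu, d_fuu, hle (hBa_sfs hs), hle (hBa_fsfu hs hsu),
        hle hBa_fuu, n_sfu, n_su, n_fsu⟩
    have hq2 : IsInducedP4 G' s (f s) w u :=
      ⟨d_sfs, d_sw, hsu, d_fsw, d_fsu, huw.symm, hle (hBa_sfs hs), aG,
        (hle hbuw).symm, n_sw, n_su, n_fsu⟩
    have heq := hsp ({s, f s, f u, u, w} : Set α) (hX5 hs hsu)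
      {s, f s, f u, u} (by intro z hz; simp only [Set.mem_insert_iff, Set.mem_singleton_iff] at hz ⊢; tauto)
      {s, f s, w, u} (by intro z hz; simp only [Set.mem_insert_iff, Set.mem_singleton_iff] at hz ⊢; tauto)
      ⟨s, f s, f u, u, rfl, hq1⟩ ⟨s, f s, w, u, rfl, hq2⟩
    have hmem : f u ∈ ({s, f s, w, u} : Set α) :=
      by rw [← heq]; simp
    simp only [Set.mem_insert_iff, Set.mem_singleton_iff] at hmem
    rcases hmem with h | h | h | h
    exacts [d_sfu h.symm, d_fsfu h.symm, d_fuw h, d_fuu h]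
  -- finally, determine the shape of g s and contradict
  obtain ⟨y0, z0, hyz⟩ : ∃ y z, g s = s(y, z) := ⟨(g s).out.1, (g s).out.2, (g s).out_eq.symm⟩
  have hyX := hqX y0 (by rw [hyz]; exact Sym2.mem_iff.mpr (Or.inl rfl))
  have hzX := hqX z0 (by rw [hyz]; exact Sym2.mem_iff.mpr (Or.inr rfl))
  have hqF' : s(y0, z0) ∈ F := hyz ▸ hqF
  have hGq : G'.Adj y0 z0 := hGF hqF'
  have hnBa : ¬ (addTail H u w).Adj y0 z0 := fun hb => hqF'.2 ((SimpleGraph.mem_edgeSet _).mpr hb)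
  have htouch : s = y0 ∨ s = z0 ∨ f s = y0 ∨ f s = z0 := by
    rcases hqT with hm | hm
    · rw [hyz] at hm
      rcases Sym2.mem_iff.mp hm with h | h
      exacts [Or.inl h, Or.inr (Or.inl h)]
    · rw [hyz] at hm
      rcases Sym2.mem_iff.mp hm with h | h
      exacts [Or.inr (Or.inr (Or.inl h)), Or.inr (Or.inr (Or.inr h))]
  simp only [Set.mem_insert_iff, Set.mem_singleton_iff] at hyX hzX
  rcases hyX with rfl | rfl | rfl | rfl | rfl <;> rcases hzX with rfl | rfl | rfl | rfl | rfl
  · exact hGq.ne rfl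
  · exact hnBa (hBa_sfs hs)
  · exact SC1 hyz
  · exact SC2 hyz
  · exact SC3 hyz
  · exact hnBa (hBa_sfs hs).symm
  · exact hGq.ne rfl
  · exact hnBa (hBa_fsfu hs hsu)
  · exact SC4 hyz
  · exact SC5 hyz
  · exact SC1 (hyz.trans Sym2.eq_swap)
  · exact hnBa (hBa_fsfu hs hsu).symm
  · exact hGq.ne rfl
  · exact hnBa hBa_fuu
  · rcases htouch with h | h | h | h
    · exact hSnK hs (h.symm ▸ hfuK)
    · exact hwS (h ▸ hs)
    · exact hsu (hfinj hs hu h)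
    · exact hwK (h ▸ hfS hs)
  · exact SC2 (hyz.trans Sym2.eq_swap)
  · exact SC4 (hyz.trans Sym2.eq_swap)
  · exact hnBa hBa_fuu.symm
  · exact hGq.ne rfl
  · exact hnBa hbuw
  · exact SC3 (hyz.trans Sym2.eq_swap)
  · exact SC5 (hyz.trans Sym2.eq_swap)
  · rcases htouch with h | h | h | h
    · exact hwS (h ▸ hs)
    · exact hSnK hs (h.symm ▸ hfuK)
    · exact hwK (h ▸ hfS hs)
    · exact hsu (hfinj hs hu h)
  · exact hnBa hbuw.symm
  · exact hGq.ne rfl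

/-- tail at `u ∈ S` of a thin spider with `R ≠ ∅` and `H[R]` P₄-sparse. -/
theorem thinSpider_tail_S_nonempty_R [Fintype α]
    (H : SimpleGraph α) (u w : α) (S K R : Set α)
    (hspider : ThinSpider H S K R)
    (hcover : S ∪ K ∪ R = {w}ᶜ)
    (hw : ∀ x, ¬ H.Adj w x)
    (hR : R.Nonempty) (hRsparse : IsP4Sparse (restrictSet H R)) (hu : u ∈ S) :
    IsLeast (completionFills IsP4Sparse (addTail H u w)) K.ncard := by
  obtain ⟨hSind, hKcl, hSKcard, hK2, hdSK, hdSR, hdKR, hRK, hRS, f, hf, hadj⟩ := hspider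
  constructor
  · exact myPart1 H u w S K R f hSind hKcl hSKcard hK2 hdSK hdSR hdKR hRK hRS hf hadj
      hcover hw hR hRsparse hu
  · rintro n ⟨G', hle, hsp, rfl⟩
    exact myPart2 H u w S K R f hSind hKcl hSKcard hK2 hdSK hdSR hdKR hRK hRS hf hadj
      hcover hw hR hRsparse hu G' hle hsp
end

section
/- Let H be a thick spider with partition (S, K, R) such that |K| ≥ 4 and R = ∅, let u ∈ S, and let uw be a tail added to H (w ∉ V(H)). Then the minimum number of fill edges (excluding the tail uw) in a P4-sparse completion of H+uw equals |K|. -/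
open SimpleGraph Set

variable {α : Type*}

lemma ncard3 {x y z : α} (h1 : x≠y) (h2 : x≠z) (h3 : y≠z) : ({x,y,z}:Set α).ncard = 3 := by
  rw [Set.ncard_insert_of_notMem (by simp [h1,h2]), Set.ncard_pair h3]

lemma ncard5 {a b c d e : α} (h1:a≠b) (h2:a≠c) (h3:a≠d) (h4:a≠e) (h5:b≠c) (h6:b≠d)
    (h7:b≠e) (h8:c≠d) (h9:c≠e) (h10:d≠e) : ({a,b,c,d,e}:Set α).ncard = 5 := by
  rw [Set.ncard_insert_of_notMem (by simp [h1,h2,h3,h4]),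
    Set.ncard_insert_of_notMem (by simp [h5,h6,h7]),
    Set.ncard_insert_of_notMem (by simp [h8,h9]), Set.ncard_pair h10]

lemma insert4_subset {a b c d : α} {T : Set α} (ha : a ∈ T) (hb : b ∈ T) (hc : c ∈ T)
    (hd : d ∈ T) : ({a,b,c,d} : Set α) ⊆ T := by
  simp only [Set.insert_subset_iff, Set.singleton_subset_iff]
  exact ⟨ha, hb, hc, hd⟩

lemma conflict {G : SimpleGraph α} (h : IsP4Sparse G) {a b c d p q r s : α} {T : Set α}
    (hT : T.ncard = 5) (h1s : ({a,b,c,d}:Set α) ⊆ T) (h2s : ({p,q,r,s}:Set α) ⊆ T)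
    (h1 : IsInducedP4 G a b c d) (h2 : IsInducedP4 G p q r s)
    (hne : ({a,b,c,d}:Set α) ≠ {p,q,r,s}) : False :=
  hne (h T hT _ h1s _ h2s ⟨a,b,c,d,rfl,h1⟩ ⟨p,q,r,s,rfl,h2⟩)

lemma addTail_adj {G : SimpleGraph α} {u w : α} (huw : u ≠ w) (x y : α) :
    (addTail G u w).Adj x y ↔ G.Adj x y ∨ (x=u∧y=w) ∨ (x=w∧y=u) := by
  simp only [addTail, sup_adj, fromEdgeSet_adj, Set.mem_singleton_iff, Sym2.eq_iff]
  constructor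
  · rintro (h|⟨(⟨rfl,rfl⟩|⟨rfl,rfl⟩),h2⟩) <;> tauto
  · rintro (h|⟨rfl,rfl⟩|⟨rfl,rfl⟩)
    · exact Or.inl h
    · exact Or.inr ⟨Or.inl ⟨rfl,rfl⟩, huw⟩
    · exact Or.inr ⟨Or.inr ⟨rfl,rfl⟩, huw.symm⟩

set_option maxHeartbeats 10000000 in
/-- tail at `u ∈ S` of a thick spider with `|K| ≥ 4` and `R = ∅`. -/
theorem thickSpider_tail_S_K4_empty_R [Fintype α]
    (H : SimpleGraph α) (u w : α) (S K R : Set α)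
    (hspider : ThickSpider H S K R)
    (hcover : S ∪ K ∪ R = {w}ᶜ)
    (hw : ∀ x, ¬ H.Adj w x)
    (hK4 : 4 ≤ K.ncard) (hR : R = ∅) (hu : u ∈ S) :
    IsLeast (completionFills IsP4Sparse (addTail H u w)) K.ncard := by
  classical
  subst hR
  rw [Set.union_empty] at hcover
  obtain ⟨hSind, hKcl, hSKcard, hK3, hdSK, -, -, -, -, f, hfbij, hfadj⟩ := hspider
  set k := K.ncard with hk
  -- basic facts
  have hwSK : w ∉ S ∪ K := by rw [hcover]; simp
  have hwS : w ∉ S := fun h => hwSK (Or.inl h)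
  have hwK : w ∉ K := fun h => hwSK (Or.inr h)
  have hmem : ∀ x, x ≠ w → x ∈ S ∨ x ∈ K := by
    intro x hx
    have : x ∈ S ∪ K := by rw [hcover]; simpa using hx
    exact this
  have hSK : ∀ x ∈ S, x ∉ K := fun x hx => Set.disjoint_left.mp hdSK hx
  have hbK : f u ∈ K := hfbij.mapsTo hu
  have hune : u ≠ w := fun h => hwS (h ▸ hu)
  have hfinj : Set.InjOn f S := hfbij.injOn
  have hKadj : ∀ x ∈ K, ∀ y ∈ K, x ≠ y → H.Adj x y := fun x hx y hy hne => hKcl hx hy hne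
  have hHadj : ∀ x y, H.Adj x y ↔
      ((x∈K ∧ y∈K ∧ x≠y) ∨ (x∈S ∧ y∈K ∧ y≠f x) ∨ (x∈K ∧ y∈S ∧ x≠f y)) := by
    intro x y
    constructor
    · intro h
      have hx : x ≠ w := fun e => hw y (e ▸ h)
      have hy : y ≠ w := fun e => hw x (e ▸ h.symm)
      rcases hmem x hx with hxS|hxK <;> rcases hmem y hy with hyS|hyK
      · exact absurd h (hSind x hxS y hyS)
      · exact Or.inr (Or.inl ⟨hxS, hyK, (hfadj x hxS y hyK).mp h⟩)
      · exact Or.inr (Or.inr ⟨hxK, hyS, (hfadj y hyS x hxK).mp h.symm⟩)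
      · exact Or.inl ⟨hxK, hyK, h.ne⟩
    · rintro (⟨hx,hy,hne⟩|⟨hx,hy,hne⟩|⟨hx,hy,hne⟩)
      · exact hKadj x hx y hy hne
      · exact (hfadj x hx y hy).mpr hne
      · exact ((hfadj y hy x hx).mpr hne).symm
  have hfuu : f u ≠ u := fun e => hSK u hu (e ▸ hbK)
  set base := addTail H u w with hbase
  constructor
  · -- membership: the completion making u universal
    set T0 : Set α := insert (f u) (S \ {u}) with hT0
    have hT0mem : ∀ z ∈ T0, z ≠ u ∧ z ≠ w ∧ z ∈ S ∪ K := by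
      rintro z (rfl|⟨hzS,hzu⟩)
      · exact ⟨hfuu, fun e => hwK (e ▸ hbK), Or.inr hbK⟩
      · exact ⟨hzu, fun e => hwS (e ▸ hzS), Or.inl hzS⟩
    have hwT0 : w ∉ T0 := fun h => hwSK (hT0mem w h).2.2
    set M : Set (Sym2 α) := (fun z => s(u,z)) '' T0 with hM
    set G2 : SimpleGraph α := base ⊔ SimpleGraph.fromEdgeSet M with hG2
    have hbase_nadj_uT0 : ∀ z ∈ T0, ¬ base.Adj u z := by
      intro z hz hadj
      rw [addTail_adj hune] at hadj
      rcases hadj with h|⟨-,he⟩|⟨h,-⟩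
      · rw [hHadj] at h
        rcases h with ⟨h1,-,-⟩|⟨-,h2,h3⟩|⟨h1,-,-⟩
        · exact hSK u hu h1
        · rcases hz with rfl|⟨hzS,-⟩
          · exact h3 rfl
          · exact hSK z hzS h2
        · exact hSK u hu h1
      · exact (hT0mem z hz).2.1 he
      · exact hune h
    have hG2nu : ∀ y, y ≠ u → G2.Adj u y := by
      intro y hy
      by_cases hyw : y = w
      · subst hyw
        exact (sup_adj _ _ _ _).mpr (Or.inl ((addTail_adj hune u _).mpr (Or.inr (Or.inl ⟨rfl,rfl⟩))))
      rcases hmem y hyw with hyS|hyK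
      · exact (sup_adj _ _ _ _).mpr (Or.inr ((fromEdgeSet_adj _).mpr
          ⟨⟨y, Or.inr ⟨hyS, hy⟩, rfl⟩, Ne.symm hy⟩))
      · by_cases hyfu : y = f u
        · exact (sup_adj _ _ _ _).mpr (Or.inr ((fromEdgeSet_adj _).mpr
            ⟨⟨y, Or.inl hyfu, rfl⟩, Ne.symm hy⟩))
        · exact (sup_adj _ _ _ _).mpr (Or.inl ((addTail_adj hune u y).mpr
            (Or.inl ((hfadj u hu y hyK).mpr hyfu))))
    have hG2w : ∀ y, G2.Adj w y → y = u := by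
      intro y hadj
      rcases (sup_adj _ _ _ _).mp hadj with h|h
      · rw [addTail_adj hune] at h
        rcases h with h|⟨h,-⟩|⟨-,h⟩
        · exact absurd h (hw y)
        · exact absurd h.symm hune
        · exact h
      · obtain ⟨⟨z,hz,hez⟩,-⟩ := (fromEdgeSet_adj _).mp h
        rcases Sym2.eq_iff.mp hez with ⟨h1,-⟩|⟨-,h2⟩
        · exact absurd h1.symm (fun e => hwS (e ▸ hu))
        · exact absurd (h2 ▸ (hT0mem z hz).2.2) hwSK
    have hG2rest : ∀ x y, x ≠ u → x ≠ w → y ≠ u → y ≠ w → (G2.Adj x y ↔ H.Adj x y) := by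
      intro x y hxu hxw hyu hyw
      rw [hG2, sup_adj, fromEdgeSet_adj, addTail_adj hune]
      constructor
      · rintro ((h|⟨rfl,-⟩|⟨rfl,-⟩)|⟨⟨z,hz,hez⟩,-⟩)
        · exact h
        · exact absurd rfl hxu
        · exact absurd rfl hxw
        · rcases Sym2.eq_iff.mp hez with ⟨h1,-⟩|⟨h1,-⟩
          · exact absurd h1.symm hxu
          · exact absurd h1.symm hyu
      · intro h; exact Or.inl (Or.inl h)
    refine ⟨G2, le_sup_left, ?_, ?_⟩
    · -- P4-sparseness of G2
      have hclass : ∀ a b c d, IsInducedP4 G2 a b c d →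
          ∃ x y, x ∈ S ∧ y ∈ S ∧ x ≠ u ∧ y ≠ u ∧ x ≠ y ∧
            ({a,b,c,d} : Set α) = {x, y, f x, f y} := by
        rintro a b c d ⟨hab,hac,had,hbc,hbd,hcd,Aab,Abc,Acd,Nac,Nad,Nbd⟩
        have hau : a ≠ u := by rintro rfl; exact Nac (hG2nu c hac.symm)
        have hbu : b ≠ u := by rintro rfl; exact Nbd (hG2nu d hbd.symm)
        have hcu : c ≠ u := by rintro rfl; exact Nac (hG2nu a hau).symm
        have hdu : d ≠ u := by rintro rfl; exact Nad (hG2nu a hau).symm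
        have haw : a ≠ w := by rintro rfl; exact hbu (hG2w b Aab)
        have hbw : b ≠ w := by rintro rfl; exact hau (hG2w a Aab.symm)
        have hcw : c ≠ w := by rintro rfl; exact hdu (hG2w d Acd)
        have hdw : d ≠ w := by rintro rfl; exact hcu (hG2w c Acd.symm)
        have Hab := (hG2rest a b hau haw hbu hbw).mp Aab
        have Hbc := (hG2rest b c hbu hbw hcu hcw).mp Abc
        have Hcd := (hG2rest c d hcu hcw hdu hdw).mp Acd
        have NHac : ¬ H.Adj a c := fun h => Nac ((hG2rest a c hau haw hcu hcw).mpr h)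
        have NHad : ¬ H.Adj a d := fun h => Nad ((hG2rest a d hau haw hdu hdw).mpr h)
        have NHbd : ¬ H.Adj b d := fun h => Nbd ((hG2rest b d hbu hbw hdu hdw).mpr h)
        rcases hmem a haw with haS|haK <;> rcases hmem b hbw with hbS|hbK <;>
          rcases hmem c hcw with hcS|hcK <;> rcases hmem d hdw with hdS|hdK
        all_goals first
          | exact absurd Hab (hSind a haS b hbS)
          | exact absurd Hbc (hSind b hbS c hcS)
          | exact absurd Hcd (hSind c hcS d hdS)
          | exact absurd (hKadj a haK c hcK hac) NHac
          | exact absurd (hKadj a haK d hdK had) NHad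
          | exact absurd (hKadj b hbK d hdK hbd) NHbd
          | (refine ⟨a, d, haS, hdS, hau, hdu, had, ?_⟩
             have hcfa : c = f a := by
               by_contra hne
               exact NHac ((hfadj a haS c hcK).mpr hne)
             have hbfd : b = f d := by
               by_contra hne
               exact NHbd (((hfadj d hdS b hbK).mpr hne).symm)
             rw [hcfa, hbfd]
             ext z
             simp only [Set.mem_insert_iff, Set.mem_singleton_iff]
             tauto)
      intro s5 hs5 t1 ht1s t2 ht2s hp1 hp2
      obtain ⟨a1,b1,c1,d1,rfl,hP1⟩ := hp1
      obtain ⟨a2,b2,c2,d2,rfl,hP2⟩ := hp2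
      obtain ⟨x1,y1,hx1S,hy1S,hx1u,hy1u,hxy1,hset1⟩ := hclass a1 b1 c1 d1 hP1
      obtain ⟨x2,y2,hx2S,hy2S,hx2u,hy2u,hxy2,hset2⟩ := hclass a2 b2 c2 d2 hP2
      rw [hset1] at ht1s ⊢
      rw [hset2] at ht2s ⊢
      have key : ∀ z, (z = x2 ∨ z = y2) → ¬(z = x1 ∨ z = y1) → False := by
        intro z hz2 hz1
        have hzS : z ∈ S := by rcases hz2 with rfl|rfl; exacts [hx2S, hy2S]
        have hzx1 : z ≠ x1 := fun e => hz1 (Or.inl e)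
        have hzy1 : z ≠ y1 := fun e => hz1 (Or.inr e)
        have hx15 : x1 ∈ s5 := ht1s (by simp)
        have hy15 : y1 ∈ s5 := ht1s (by simp)
        have hfx15 : f x1 ∈ s5 := ht1s (by simp)
        have hfy15 : f y1 ∈ s5 := ht1s (by simp)
        have hz5 : z ∈ s5 := ht2s (by rcases hz2 with rfl|rfl <;> simp)
        have hfz5 : f z ∈ s5 := ht2s (by rcases hz2 with rfl|rfl <;> simp)
        have h6 : ({x1,y1,z} ∪ {f x1, f y1, f z} : Set α) ⊆ s5 := by
          intro e he
          simp only [Set.mem_union, Set.mem_insert_iff, Set.mem_singleton_iff] at he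
          rcases he with (rfl|rfl|rfl)|(rfl|rfl|rfl) <;> assumption
        have hd : Disjoint ({x1,y1,z} : Set α) ({f x1, f y1, f z} : Set α) := by
          rw [Set.disjoint_left]
          intro e he1 he2
          have heS : e ∈ S := by
            simp only [Set.mem_insert_iff, Set.mem_singleton_iff] at he1
            rcases he1 with rfl|rfl|rfl <;> assumption
          have heK : e ∈ K := by
            simp only [Set.mem_insert_iff, Set.mem_singleton_iff] at he2
            rcases he2 with rfl|rfl|rfl
            exacts [hfbij.mapsTo hx1S, hfbij.mapsTo hy1S, hfbij.mapsTo hzS]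
          exact hSK e heS heK
        have hc1 : ({x1,y1,z}:Set α).ncard = 3 := ncard3 hxy1 hzx1.symm hzy1.symm
        have hc2 : ({f x1,f y1,f z}:Set α).ncard = 3 :=
          ncard3 (fun e => hxy1 (hfinj hx1S hy1S e))
            (fun e => hzx1 (hfinj hx1S hzS e).symm)
            (fun e => hzy1 (hfinj hy1S hzS e).symm)
        have hcu6 : ({x1,y1,z} ∪ {f x1,f y1,f z} : Set α).ncard = 6 := by
          rw [Set.ncard_union_eq hd (Set.toFinite _) (Set.toFinite _), hc1, hc2]
        have hle := Set.ncard_le_ncard h6 (Set.toFinite s5)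
        omega
      have hp2x : x2 = x1 ∨ x2 = y1 := by
        by_contra hcon; exact key x2 (Or.inl rfl) hcon
      have hp2y : y2 = x1 ∨ y2 = y1 := by
        by_contra hcon; exact key y2 (Or.inr rfl) hcon
      rcases hp2x with h1|h1 <;> rcases hp2y with h2|h2
      · exact absurd (h1.trans h2.symm) hxy2
      · rw [h1, h2]
      · rw [h1, h2]
        ext z
        simp only [Set.mem_insert_iff, Set.mem_singleton_iff]
        tauto
      · exact absurd (h1.trans h2.symm) hxy2
    · -- fill count = k
      have hdiff : G2.edgeSet \ base.edgeSet = M := by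
        ext e
        constructor
        · rintro ⟨h1, h2⟩
          rw [hG2, edgeSet_sup, edgeSet_fromEdgeSet] at h1
          rcases h1 with h|⟨h,-⟩
          · exact absurd h h2
          · exact h
        · rintro ⟨z, hz, rfl⟩
          have hzu := (hT0mem z hz).1
          constructor
          · rw [hG2, edgeSet_sup, edgeSet_fromEdgeSet]
            refine Or.inr ⟨⟨z, hz, rfl⟩, ?_⟩
            simp only [Set.mem_setOf_eq, Sym2.isDiag_iff_proj_eq]
            exact Ne.symm hzu
          · rw [mem_edgeSet]
            exact hbase_nadj_uT0 z hz
      rw [fillCount, hdiff, hM]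
      rw [Set.ncard_image_of_injOn (by
        intro z1 h1 z2 h2 he
        rcases Sym2.eq_iff.mp he with ⟨-,h⟩|⟨h,-⟩
        · exact h
        · exact absurd h.symm (hT0mem z2 h2).1)]
      rw [hT0, Set.ncard_insert_of_notMem (by
        rintro ⟨h1,-⟩
        exact hSK (f u) h1 hbK)]
      rw [Set.ncard_diff_singleton_of_mem hu]
      rw [hSKcard]
      omega
  · -- lower bound
    rintro n ⟨G', hle, hsp, rfl⟩
    by_contra hlt
    push_neg at hlt
    rw [fillCount] at hlt
    set F : Set (Sym2 α) := G'.edgeSet \ base.edgeSet with hFdef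
    haveI : Nonempty α := ⟨u⟩
    set g : α → α := Function.invFunOn f S with hgdef
    have hgS : ∀ a ∈ K, g a ∈ S := fun a ha => Function.invFunOn_mem (hfbij.surjOn ha)
    have hgf : ∀ a ∈ K, f (g a) = a := fun a ha => Function.invFunOn_eq (hfbij.surjOn ha)
    -- adjacency transfer
    have hle' : ∀ {x y}, base.Adj x y → G'.Adj x y := fun h => hle h
    have hAH : ∀ {x y}, H.Adj x y → G'.Adj x y :=
      fun {x y} h => hle' ((addTail_adj hune x y).mpr (Or.inl h))
    have hAuw : G'.Adj u w := hle' ((addTail_adj hune u w).mpr (Or.inr (Or.inl ⟨rfl, rfl⟩)))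
    have hAKK : ∀ c ∈ K, ∀ c' ∈ K, c ≠ c' → G'.Adj c c' := fun c hc c' hc' h => hAH (hKadj c hc c' hc' h)
    have hASK : ∀ x ∈ S, ∀ c ∈ K, c ≠ f x → G'.Adj x c := fun x hx c hc h => hAH ((hfadj x hx c hc).mpr h)
    have hFmem : ∀ {x y}, G'.Adj x y → ¬ base.Adj x y → s(x, y) ∈ F :=
      fun {x y} h hb => ⟨h, fun hc => hb hc⟩
    have hnadj : ∀ {x y}, ¬ base.Adj x y → s(x, y) ∉ F → ¬ G'.Adj x y :=
      fun {x y} hb hf ha => hf ⟨ha, fun hc => hb hc⟩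
    have hnb : ∀ x y, x ≠ w → y ≠ w → ¬ H.Adj x y → ¬ base.Adj x y := by
      intro x y hx hy h hadj
      rw [addTail_adj hune] at hadj
      rcases hadj with h'|⟨-, h2⟩|⟨h1, -⟩
      exacts [h h', hy h2, hx h1]
    have hnbw : ∀ y, y ≠ u → ¬ base.Adj w y := by
      intro y hy hadj
      rw [addTail_adj hune] at hadj
      rcases hadj with h'|⟨h1, -⟩|⟨-, h2⟩
      exacts [hw y h', hune h1.symm, hy h2]
    have hnbSS : ∀ x ∈ S, ∀ y ∈ S, ¬ base.Adj x y :=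
      fun x hx y hy => hnb x y (fun e => hwS (e ▸ hx)) (fun e => hwS (e ▸ hy))
        (hSind x hx y hy)
    have hnbSf : ∀ x ∈ S, ∀ c ∈ K, c = f x → ¬ base.Adj x c := by
      intro x hx c hc he
      refine hnb x c (fun e => hwS (e ▸ hx)) (fun e => hwK (e ▸ hc)) (fun h => ?_)
      exact ((hfadj x hx c hc).mp h) he
    -- the key sets A and B
    set A : Set α := {c | c ∈ K ∧ c ≠ f u ∧ ¬ G'.Adj w c} with hAdef
    set B : Set α := {x | x ∈ S ∧ x ≠ u ∧ ¬ G'.Adj w x ∧ ¬ G'.Adj u x} with hBdef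
    have hAK : A ⊆ K := fun c hc => hc.1
    have hBS : B ⊆ S := fun x hx => hx.1
    have hfuA : f u ∉ A := fun h => h.2.1 rfl
    have huB : u ∉ B := fun h => h.2.1 rfl
    -- surviving P4s
    have hp4A : ∀ c ∈ A, ∀ x ∈ B, f x ≠ c → IsInducedP4 G' w u c x := by
      rintro c ⟨hcK, hcb, hwc⟩ x ⟨hxS, hxu, hwx, hux⟩ hfx
      have hwu : w ≠ u := hune.symm
      have hwc' : w ≠ c := fun e => hwK (e ▸ hcK)
      have hwx' : w ≠ x := fun e => hwS (e ▸ hxS)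
      have huc : u ≠ c := fun e => hSK u hu (e ▸ hcK)
      have hux' : u ≠ x := hxu.symm
      have hcx : c ≠ x := fun e => hSK x hxS (e ▸ hcK)
      exact ⟨hwu, hwc', hwx', huc, hux', hcx, hAuw.symm,
        hASK u hu c hcK hcb, (hASK x hxS c hcK hfx.symm).symm, hwc, hwx, hux⟩
    have hp4b : ¬ G'.Adj w (f u) → ¬ G'.Adj u (f u) → ∀ c ∈ A, IsInducedP4 G' w u c (f u) := by
      rintro hwfu hufu c ⟨hcK, hcb, hwc⟩
      have hwu : w ≠ u := hune.symm
      have hwc' : w ≠ c := fun e => hwK (e ▸ hcK)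
      have hwfu' : w ≠ f u := fun e => hwK (e ▸ hbK)
      have huc : u ≠ c := fun e => hSK u hu (e ▸ hcK)
      have hufu' : u ≠ f u := hfuu.symm
      have hcfu : c ≠ f u := hcb
      exact ⟨hwu, hwc', hwfu', huc, hufu', hcfu, hAuw.symm,
        hASK u hu c hcK hcb, hAKK c hcK (f u) hbK hcb, hwc, hwfu, hufu⟩
    -- conflicts
    have hC1 : ∀ c ∈ A, ∀ x ∈ B, ∀ y ∈ B, x ≠ y → f x ≠ c → f y ≠ c → False := by
      intro c hc x hx y hy hxy hfx hfy
      have hcK' := hAK hc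
      have hxS := hBS hx
      have hyS := hBS hy
      have hwu : w ≠ u := hune.symm
      have hwc : w ≠ c := fun e => hwK (e ▸ hcK')
      have hwx : w ≠ x := fun e => hwS (e ▸ hxS)
      have hwy : w ≠ y := fun e => hwS (e ▸ hyS)
      have huc : u ≠ c := fun e => hSK u hu (e ▸ hcK')
      have hux : u ≠ x := (hx.2.1).symm
      have huy : u ≠ y := (hy.2.1).symm
      have hcx : c ≠ x := fun e => hSK x hxS (e ▸ hcK')
      have hcy : c ≠ y := fun e => hSK y hyS (e ▸ hcK')
      refine conflict hsp (T := {w, u, c, x, y})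
        (ncard5 hwu hwc hwx hwy huc hux huy hcx hcy hxy) ?_ ?_
        (hp4A c hc x hx hfx) (hp4A c hc y hy hfy) ?_
      · exact insert4_subset (by simp) (by simp) (by simp) (by simp)
      · exact insert4_subset (by simp) (by simp) (by simp) (by simp)
      · intro heq
        have : x ∈ ({w, u, c, y} : Set α) := heq ▸ (by simp)
        simp only [Set.mem_insert_iff, Set.mem_singleton_iff] at this
        rcases this with e|e|e|e
        exacts [hwx e.symm, hux e.symm, hcx e.symm, hxy e]
    have hC2 : ∀ c ∈ A, ∀ c' ∈ A, c ≠ c' → ∀ x ∈ B, f x ≠ c → f x ≠ c' → False := by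
      intro c hc c' hc' hcc x hx hfx hfx'
      have hcK' := hAK hc
      have hcK'' := hAK hc'
      have hxS := hBS hx
      have hwu : w ≠ u := hune.symm
      have hwc : w ≠ c := fun e => hwK (e ▸ hcK')
      have hwc' : w ≠ c' := fun e => hwK (e ▸ hcK'')
      have hwx : w ≠ x := fun e => hwS (e ▸ hxS)
      have huc : u ≠ c := fun e => hSK u hu (e ▸ hcK')
      have huc' : u ≠ c' := fun e => hSK u hu (e ▸ hcK'')
      have hux : u ≠ x := (hx.2.1).symm
      have hcx : c ≠ x := fun e => hSK x hxS (e ▸ hcK')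
      have hcx' : c' ≠ x := fun e => hSK x hxS (e ▸ hcK'')
      refine conflict hsp (T := {w, u, c, c', x})
        (ncard5 hwu hwc hwc' hwx huc huc' hux hcc hcx hcx') ?_ ?_
        (hp4A c hc x hx hfx) (hp4A c' hc' x hx hfx') ?_
      · exact insert4_subset (by simp) (by simp) (by simp) (by simp)
      · exact insert4_subset (by simp) (by simp) (by simp) (by simp)
      · intro heq
        have : c ∈ ({w, u, c', x} : Set α) := heq ▸ (by simp)
        simp only [Set.mem_insert_iff, Set.mem_singleton_iff] at this
        rcases this with e|e|e|e
        exacts [hwc e.symm, huc e.symm, hcc e, hcx e]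
    have hC3 : ¬ G'.Adj w (f u) → ¬ G'.Adj u (f u) →
        ∀ c ∈ A, ∀ x ∈ B, f x ≠ c → False := by
      intro hwfu hufu c hc x hx hfx
      have hcK' := hAK hc
      have hxS := hBS hx
      have hwu : w ≠ u := hune.symm
      have hwc : w ≠ c := fun e => hwK (e ▸ hcK')
      have hwfu' : w ≠ f u := fun e => hwK (e ▸ hbK)
      have hwx : w ≠ x := fun e => hwS (e ▸ hxS)
      have huc : u ≠ c := fun e => hSK u hu (e ▸ hcK')
      have hux : u ≠ x := (hx.2.1).symm
      have hufu' : u ≠ f u := hfuu.symm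
      have hcfu : c ≠ f u := hc.2.1
      have hcx : c ≠ x := fun e => hSK x hxS (e ▸ hcK')
      have hfux : f u ≠ x := fun e => hSK x hxS (e ▸ hbK)
      refine conflict hsp (T := {w, u, c, f u, x})
        (ncard5 hwu hwc hwfu' hwx huc hufu' hux hcfu hcx hfux) ?_ ?_
        (hp4A c hc x hx hfx) (hp4b hwfu hufu c hc) ?_
      · exact insert4_subset (by simp) (by simp) (by simp) (by simp)
      · exact insert4_subset (by simp) (by simp) (by simp) (by simp)
      · intro heq
        have : x ∈ ({w, u, c, f u} : Set α) := heq ▸ (by simp)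
        simp only [Set.mem_insert_iff, Set.mem_singleton_iff] at this
        rcases this with e|e|e|e
        exacts [hwx e.symm, hux e.symm, hcx e.symm, hfux e.symm]
    have hC4 : ¬ G'.Adj w (f u) → ¬ G'.Adj u (f u) →
        ∀ c ∈ A, ∀ c' ∈ A, c ≠ c' → False := by
      intro hwfu hufu c hc c' hc' hcc
      have hcK' := hAK hc
      have hcK'' := hAK hc'
      have hwu : w ≠ u := hune.symm
      have hwc : w ≠ c := fun e => hwK (e ▸ hcK')
      have hwc' : w ≠ c' := fun e => hwK (e ▸ hcK'')
      have hwfu' : w ≠ f u := fun e => hwK (e ▸ hbK)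
      have huc : u ≠ c := fun e => hSK u hu (e ▸ hcK')
      have huc' : u ≠ c' := fun e => hSK u hu (e ▸ hcK'')
      have hufu' : u ≠ f u := hfuu.symm
      refine conflict hsp (T := {w, u, c, c', f u})
        (ncard5 hwu hwc hwc' hwfu' huc huc' hufu' hcc hc.2.1 hc'.2.1) ?_ ?_
        (hp4b hwfu hufu c hc) (hp4b hwfu hufu c' hc') ?_
      · exact insert4_subset (by simp) (by simp) (by simp) (by simp)
      · exact insert4_subset (by simp) (by simp) (by simp) (by simp)
      · intro heq
        have : c ∈ ({w, u, c', f u} : Set α) := heq ▸ (by simp)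
        simp only [Set.mem_insert_iff, Set.mem_singleton_iff] at this
        rcases this with e|e|e|e
        exacts [hwc e.symm, huc e.symm, hcc e, hc.2.1 e]
    -- the counting sets
    set KA : Set α := K \ insert (f u) A with hKAdef
    set E1 : Set (Sym2 α) := (fun c => s(w, c)) '' KA with hE1def
    set SB : Set α := S \ insert u B with hSBdef
    set h2 : α → Sym2 α := fun x => if G'.Adj w x then s(w, x) else s(u, x) with hh2def
    set E2 : Set (Sym2 α) := h2 '' SB with hE2def
    set E3 : Set (Sym2 α) := {e | (e = s(w, f u) ∨ e = s(u, f u)) ∧ e ∈ F} with hE3def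
    have hKAmem : ∀ c ∈ KA, c ∈ K ∧ c ≠ f u ∧ G'.Adj w c := by
      rintro c ⟨hcK, hcA⟩
      simp only [Set.mem_insert_iff, not_or] at hcA
      refine ⟨hcK, hcA.1, ?_⟩
      by_contra hna
      exact hcA.2 ⟨hcK, hcA.1, hna⟩
    have hSBmem : ∀ x ∈ SB, x ∈ S ∧ x ≠ u ∧ (G'.Adj w x ∨ G'.Adj u x) := by
      rintro x ⟨hxS, hxB⟩
      simp only [Set.mem_insert_iff, not_or] at hxB
      refine ⟨hxS, hxB.1, ?_⟩
      by_contra hna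
      push_neg at hna
      exact hxB.2 ⟨hxS, hxB.1, hna.1, hna.2⟩
    have hE1F : E1 ⊆ F := by
      rintro e ⟨c, hc, rfl⟩
      obtain ⟨hcK, -, hadj⟩ := hKAmem c hc
      exact hFmem hadj (hnbw c (fun e => hSK u hu (e ▸ hcK)))
    have hE2F : E2 ⊆ F := by
      rintro e ⟨x, hx, rfl⟩
      obtain ⟨hxS, hxu, hadj⟩ := hSBmem x hx
      by_cases hwx : G'.Adj w x
      · rw [hh2def]
        simp only []
        rw [if_pos hwx]
        exact hFmem hwx (hnbw x hxu)
      · rw [hh2def]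
        simp only []
        rw [if_neg hwx]
        have hux : G'.Adj u x := hadj.resolve_left hwx
        exact hFmem hux (hnbSS u hu x hxS)
    have hE3F : E3 ⊆ F := fun e he => he.2
    have hKAcard : KA.ncard + (A.ncard + 1) = K.ncard := by
      rw [hKAdef]
      have hsub : insert (f u) A ⊆ K := Set.insert_subset hbK hAK
      have := Set.ncard_diff_add_ncard_of_subset hsub (Set.toFinite K)
      rwa [Set.ncard_insert_of_notMem hfuA (Set.toFinite A)] at this
    have hSBcard : SB.ncard + (B.ncard + 1) = K.ncard := by
      rw [hSBdef]
      have hsub : insert u B ⊆ S := Set.insert_subset hu hBS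
      have := Set.ncard_diff_add_ncard_of_subset hsub (Set.toFinite S)
      rw [Set.ncard_insert_of_notMem huB (Set.toFinite B)] at this
      rw [this, hSKcard]
    have hE1card : E1.ncard = KA.ncard := by
      have hinj : Set.InjOn (fun c => s(w, c)) KA := by
        intro c1 h1 c2 h2' he
        rcases Sym2.eq_iff.mp he with ⟨-, h⟩|⟨h, -⟩
        · exact h
        · exact absurd h.symm (fun e => hwK (e ▸ (hKAmem c2 h2').1))
      rw [hE1def, Set.ncard_image_of_injOn hinj]
    have hE2card : E2.ncard = SB.ncard := by
      have hinj : Set.InjOn h2 SB := by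
        intro x1 h1 x2 h2' he
        have hx1 := hSBmem x1 h1
        have hx2 := hSBmem x2 h2'
        have hx1w : x1 ≠ w := fun e => hwS (e ▸ hx1.1)
        have hx2w : x2 ≠ w := fun e => hwS (e ▸ hx2.1)
        rw [hh2def] at he
        simp only [] at he
        by_cases ha1 : G'.Adj w x1 <;> by_cases ha2 : G'.Adj w x2
        · rw [if_pos ha1, if_pos ha2] at he
          rcases Sym2.eq_iff.mp he with ⟨-, h⟩|⟨-, h⟩
          · exact h
          · exact absurd h hx1w
        · rw [if_pos ha1, if_neg ha2] at he
          rcases Sym2.eq_iff.mp he with ⟨h, -⟩|⟨h, -⟩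
          · exact absurd h.symm hune
          · exact absurd h.symm hx2w
        · rw [if_neg ha1, if_pos ha2] at he
          rcases Sym2.eq_iff.mp he with ⟨h, -⟩|⟨-, h⟩
          · exact absurd h hune
          · exact absurd h hx1w
        · rw [if_neg ha1, if_neg ha2] at he
          rcases Sym2.eq_iff.mp he with ⟨-, h⟩|⟨h, -⟩
          · exact h
          · exact absurd h.symm (hx2.2.1)
      rw [hE2def, Set.ncard_image_of_injOn hinj]
    -- disjointness
    have hd12 : Disjoint E1 E2 := by
      rw [Set.disjoint_left]
      rintro e ⟨c, hc, rfl⟩ ⟨x, hx, he⟩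
      have hcK' := (hKAmem c hc).1
      have hxS := (hSBmem x hx).1
      rw [hh2def] at he
      simp only [] at he
      by_cases ha : G'.Adj w x
      · rw [if_pos ha] at he
        rcases Sym2.eq_iff.mp he with ⟨-, h⟩|⟨h, -⟩
        · exact hSK x hxS (by rw [h]; exact hcK')
        · exact hwK (by rw [h]; exact hcK')
      · rw [if_neg ha] at he
        rcases Sym2.eq_iff.mp he with ⟨h, -⟩|⟨h, -⟩
        · exact hune h
        · exact hSK u hu (by rw [h]; exact hcK')
    have hd13 : Disjoint E1 E3 := by
      rw [Set.disjoint_left]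
      rintro e ⟨c, hc, rfl⟩ ⟨he, -⟩
      have hcfu := (hKAmem c hc).2.1
      rcases he with he|he
      · rcases Sym2.eq_iff.mp he with ⟨-, h⟩|⟨h, -⟩
        · exact hcfu h
        · exact hwK (by rw [h]; exact hbK)
      · rcases Sym2.eq_iff.mp he with ⟨h, -⟩|⟨h, -⟩
        · exact hune h.symm
        · exact hwK (by rw [h]; exact hbK)
    have hd23 : Disjoint E2 E3 := by
      rw [Set.disjoint_left]
      rintro e ⟨x, hx, rfl⟩ ⟨he, -⟩
      have hxS := (hSBmem x hx).1
      have hxu := (hSBmem x hx).2.1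
      have hfuS : f u ∉ S := fun h => hSK (f u) h hbK
      rw [hh2def] at he
      simp only [] at he
      by_cases ha : G'.Adj w x
      · rw [if_pos ha] at he
        rcases he with he|he
        · rcases Sym2.eq_iff.mp he with ⟨-, h⟩|⟨h, -⟩
          · exact hfuS (by rw [← h]; exact hxS)
          · exact hwK (by rw [h]; exact hbK)
        · rcases Sym2.eq_iff.mp he with ⟨h, -⟩|⟨h, -⟩
          · exact hune h.symm
          · exact hwK (by rw [h]; exact hbK)
      · rw [if_neg ha] at he
        rcases he with he|he
        · rcases Sym2.eq_iff.mp he with ⟨h, -⟩|⟨h, -⟩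
          · exact hune h
          · exact hfuu h.symm
        · rcases Sym2.eq_iff.mp he with ⟨-, h⟩|⟨h, -⟩
          · exact hfuS (by rw [← h]; exact hxS)
          · exact hfuu h.symm
    have hunionF : E1 ∪ E2 ∪ E3 ⊆ F := Set.union_subset (Set.union_subset hE1F hE2F) hE3F
    have hucard : (E1 ∪ E2 ∪ E3).ncard = E1.ncard + E2.ncard + E3.ncard := by
      rw [Set.ncard_union_eq (Set.disjoint_union_left.mpr ⟨hd13, hd23⟩)
        ((Set.toFinite E1).union (Set.toFinite E2)) (Set.toFinite E3),
        Set.ncard_union_eq hd12 (Set.toFinite E1) (Set.toFinite E2)]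
    have hFbound : E1.ncard + E2.ncard + E3.ncard < K.ncard := by
      calc E1.ncard + E2.ncard + E3.ncard = (E1 ∪ E2 ∪ E3).ncard := hucard.symm
        _ ≤ F.ncard := Set.ncard_le_ncard hunionF (Set.toFinite F)
        _ < K.ncard := hlt
    have hsumF : E1.ncard + E2.ncard + E3.ncard ≤ F.ncard := by
      rw [← hucard]
      exact Set.ncard_le_ncard hunionF (Set.toFinite F)
    by_cases hbeta : ¬ G'.Adj w (f u) ∧ ¬ G'.Adj u (f u)
    · obtain ⟨hwfu, hufu⟩ := hbeta
      have hA1 : A.ncard ≤ 1 := by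
        by_contra hA1
        push_neg at hA1
        obtain ⟨c, hc, c', hc', hcc⟩ := (Set.one_lt_ncard (Set.toFinite A)).mp hA1
        exact hC4 hwfu hufu c hc c' hc' hcc
      rcases Set.eq_empty_or_nonempty A with hAe|hAne
      · -- A empty: F = E1 exactly, explicit contradiction
        have hA0 : A.ncard = 0 := by rw [hAe]; exact Set.ncard_empty _
        have hFeq : E1 = F := by
          refine Set.eq_of_subset_of_ncard_le hE1F ?_ (Set.toFinite F)
          omega
        obtain ⟨a, haK, hafu⟩ := Set.exists_ne_of_one_lt_ncard (show 1 < K.ncard by omega) (f u)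
        set x := g a with hxdef
        have hxS : x ∈ S := hgS a haK
        have hfx : f x = a := hgf a haK
        have hxu : x ≠ u := fun e => hafu (by rw [← hfx, e])
        have hxw : x ≠ w := fun e => hwS (by rw [← e]; exact hxS)
        have haw : a ≠ w := fun e => hwK (by rw [← e]; exact haK)
        have hfuw : f u ≠ w := fun e => hwK (by rw [← e]; exact hbK)
        have hfuS : f u ∉ S := fun h => hSK (f u) h hbK
        have hnF : ∀ p q : α, p ≠ w → q ≠ w → s(p, q) ∉ F := by
          intro p q hp hq hmem
          rw [← hFeq] at hmem
          obtain ⟨c, hc, he⟩ := hmem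
          rcases Sym2.eq_iff.mp he with ⟨h1, -⟩|⟨h2, -⟩
          · exact hp h1.symm
          · exact hq h2.symm
        have hswx : s(w, x) ∉ F := by
          rw [← hFeq]
          rintro ⟨c, hc, he⟩
          rcases Sym2.eq_iff.mp he with ⟨-, h⟩|⟨h, -⟩
          · exact hSK x hxS (by rw [← h]; exact (hKAmem c hc).1)
          · exact hwS (by rw [h]; exact hxS)
        have hwaF : s(w, a) ∈ F := by
          rw [← hFeq]
          refine ⟨a, ⟨haK, ?_⟩, rfl⟩
          simp only [Set.mem_insert_iff, not_or]
          refine ⟨hafu, ?_⟩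
          rw [hAe]
          exact Set.notMem_empty a
        have hAwa : G'.Adj w a := hwaF.1
        have hNxa : ¬ G'.Adj x a := hnadj (hnbSf x hxS a haK hfx.symm) (hnF x a hxw haw)
        have hNxu : ¬ G'.Adj x u := hnadj (hnbSS x hxS u hu) (hnF x u hxw hune)
        have hNfuu : ¬ G'.Adj (f u) u := fun h => hufu h.symm
        have hNxw : ¬ G'.Adj x w := fun h => (hnadj (hnbw x hxu) hswx) h.symm
        have hNfuw : ¬ G'.Adj (f u) w := fun h => hwfu h.symm
        have d1 : x ≠ f u := fun e => hfuS (by rw [← e]; exact hxS)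
        have d2 : x ≠ a := fun e => hSK x hxS (by rw [e]; exact haK)
        have d5 : f u ≠ a := fun e => hafu e.symm
        have d6 : f u ≠ u := hfuu
        have d8 : a ≠ u := fun e => hSK u hu (by rw [← e]; exact haK)
        have hP1 : IsInducedP4 G' x (f u) a u :=
          ⟨d1, d2, hxu, d5, d6, d8,
            hASK x hxS (f u) hbK (by rw [hfx]; exact d5),
            hAKK (f u) hbK a haK d5,
            (hASK u hu a haK hafu).symm,
            hNxa, hNxu, hNfuu⟩
        have hP2 : IsInducedP4 G' x (f u) a w :=
          ⟨d1, d2, hxw, d5, hfuw, haw,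
            hASK x hxS (f u) hbK (by rw [hfx]; exact d5),
            hAKK (f u) hbK a haK d5,
            hAwa.symm,
            hNxa, hNxw, hNfuw⟩
        refine conflict hsp (T := {x, f u, a, u, w})
          (ncard5 d1 d2 hxu hxw d5 d6 hfuw d8 haw hune) ?_ ?_ hP1 hP2 ?_
        · exact insert4_subset (by simp) (by simp) (by simp) (by simp)
        · exact insert4_subset (by simp) (by simp) (by simp) (by simp)
        · intro heq
          have hm : u ∈ ({x, f u, a, w} : Set α) := heq ▸ (by simp)
          simp only [Set.mem_insert_iff, Set.mem_singleton_iff] at hm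
          rcases hm with e|e|e|e
          exacts [hxu e.symm, d6 e.symm, d8 e.symm, hune e]
      · have hB1 : B.ncard ≤ 1 := by
          obtain ⟨c, hc⟩ := hAne
          by_contra hB1
          push_neg at hB1
          obtain ⟨x, hx, y, hy, hxy⟩ := (Set.one_lt_ncard (Set.toFinite B)).mp hB1
          by_cases hfx : f x = c
          · have hfy : f y ≠ c := fun e => hxy (hfinj (hBS hx) (hBS hy) (hfx.trans e.symm))
            exact hC3 hwfu hufu c hc y hy hfy
          · exact hC3 hwfu hufu c hc x hx hfx
        omega
    · have hE3ne : 1 ≤ E3.ncard := by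
        rw [not_and_or, not_not, not_not] at hbeta
        have hne : E3.Nonempty := by
          rcases hbeta with h|h
          · exact ⟨s(w, f u), Or.inl rfl, hFmem h (hnbw (f u) hfuu)⟩
          · exact ⟨s(u, f u), Or.inr rfl, hFmem h (hnbSf u hu (f u) hbK rfl)⟩
        exact (Set.ncard_pos (Set.toFinite E3)).mpr hne
      have hAne : A.Nonempty := by
        rcases Set.eq_empty_or_nonempty A with h|h
        · exfalso
          have hA0 : A.ncard = 0 := by rw [h]; exact Set.ncard_empty _
          omega
        · exact h
      have hBne : B.Nonempty := by
        rcases Set.eq_empty_or_nonempty B with h|h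
        · exfalso
          have hB0 : B.ncard = 0 := by rw [h]; exact Set.ncard_empty _
          omega
        · exact h
      have hB2 : B.ncard ≤ 2 := by
        by_contra hB2'
        push_neg at hB2'
        obtain ⟨c0, hc0⟩ := hAne
        set Bad : Set α := {x ∈ B | f x = c0} with hBaddef
        have hBadsub : Bad ⊆ B := fun x hx => hx.1
        have hBad1 : Bad.ncard ≤ 1 := (Set.ncard_le_one (Set.toFinite _)).mpr
          (fun x hx y hy => hfinj (hBS hx.1) (hBS hy.1) (hx.2.trans hy.2.symm))
        have hBB : 1 < (B \ Bad).ncard := by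
          rw [Set.ncard_diff hBadsub (Set.toFinite _)]
          omega
        obtain ⟨x, hx, y, hy, hxy⟩ := (Set.one_lt_ncard (Set.toFinite _)).mp hBB
        exact hC1 c0 hc0 x hx.1 y hy.1 hxy (fun e => hx.2 ⟨hx.1, e⟩) (fun e => hy.2 ⟨hy.1, e⟩)
      have hA2 : A.ncard ≤ 2 := by
        by_contra hA2'
        push_neg at hA2'
        obtain ⟨x0, hx0⟩ := hBne
        set Bad : Set α := {c ∈ A | c = f x0} with hBaddef
        have hBadsub : Bad ⊆ A := fun c hc => hc.1
        have hBad1 : Bad.ncard ≤ 1 := (Set.ncard_le_one (Set.toFinite _)).mpr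
          (fun c hc c' hc' => hc.2.trans hc'.2.symm)
        have hAA : 1 < (A \ Bad).ncard := by
          rw [Set.ncard_diff hBadsub (Set.toFinite _)]
          omega
        obtain ⟨c, hc, c', hc', hcc⟩ := (Set.one_lt_ncard (Set.toFinite _)).mp hAA
        exact hC2 c hc.1 c' hc'.1 hcc x0 hx0
          (fun e => hc.2 ⟨hc.1, e.symm⟩) (fun e => hc'.2 ⟨hc'.1, e.symm⟩)
      -- numeric pinning
      have hA2eq : A.ncard = 2 := by omega
      have hB2eq : B.ncard = 2 := by omega
      have hKA1c : KA.ncard = 1 := by omega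
      have hSB1c : SB.ncard = 1 := by omega
      have hFeqU : E1 ∪ E2 ∪ E3 = F := by
        refine Set.eq_of_subset_of_ncard_le hunionF ?_ (Set.toFinite F)
        rw [hucard]
        omega
      -- structure extraction
      obtain ⟨x, y, hxy, hBeq⟩ := Set.ncard_eq_two.mp hB2eq
      have hxB : x ∈ B := by rw [hBeq]; exact Or.inl rfl
      have hyB : y ∈ B := by rw [hBeq]; exact Or.inr rfl
      have hxS := hBS hxB
      have hyS := hBS hyB
      have hxu : x ≠ u := hxB.2.1
      have hyu : y ≠ u := hyB.2.1
      have hwx : ¬ G'.Adj w x := hxB.2.2.1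
      have hux : ¬ G'.Adj u x := hxB.2.2.2
      have hwy : ¬ G'.Adj w y := hyB.2.2.1
      have huy : ¬ G'.Adj u y := hyB.2.2.2
      have hfxfy : f x ≠ f y := fun e => hxy (hfinj hxS hyS e)
      have hmemA : ∀ c ∈ A, c = f x ∨ c = f y := by
        intro c hc
        by_contra hcon
        push_neg at hcon
        exact hC1 c hc x hxB y hyB hxy (fun e => hcon.1 e.symm) (fun e => hcon.2 e.symm)
      have hfA : f x ∈ A ∧ f y ∈ A := by
        obtain ⟨c1, c2, hc12, hAeq2⟩ := Set.ncard_eq_two.mp hA2eq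
        have h1 := hmemA c1 (by rw [hAeq2]; exact Or.inl rfl)
        have h2 := hmemA c2 (by rw [hAeq2]; exact Or.inr rfl)
        rcases h1 with rfl|rfl <;> rcases h2 with rfl|rfl
        · exact absurd rfl hc12
        · exact ⟨by rw [hAeq2]; exact Or.inl rfl, by rw [hAeq2]; exact Or.inr rfl⟩
        · exact ⟨by rw [hAeq2]; exact Or.inr rfl, by rw [hAeq2]; exact Or.inl rfl⟩
        · exact absurd rfl hc12
      obtain ⟨hfxA, hfyA⟩ := hfA
      have hwfx : ¬ G'.Adj w (f x) := hfxA.2.2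
      have hwfy : ¬ G'.Adj w (f y) := hfyA.2.2
      -- the remaining clique vertex r0 and S vertex z0
      obtain ⟨r0, hKA1⟩ := Set.ncard_eq_one.mp hKA1c
      have hr0 : r0 ∈ KA := by rw [hKA1]; exact rfl
      obtain ⟨hr0K, hr0fu, hwr0⟩ := hKAmem r0 hr0
      have hr0A : r0 ∉ A := fun h => hr0.2 (Set.mem_insert_of_mem _ h)
      have hr0fx : r0 ≠ f x := fun e => hr0A (by rw [e]; exact hfxA)
      have hr0fy : r0 ≠ f y := fun e => hr0A (by rw [e]; exact hfyA)
      obtain ⟨z0, hSB1⟩ := Set.ncard_eq_one.mp hSB1c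
      have hz0 : z0 ∈ SB := by rw [hSB1]; exact rfl
      obtain ⟨hz0S, hz0u, hz0adj⟩ := hSBmem z0 hz0
      have hz0B : z0 ∉ B := fun h => hz0.2 (Set.mem_insert_of_mem _ h)
      have hz0x : z0 ≠ x := fun e => hz0B (by rw [e]; exact hxB)
      have hz0y : z0 ≠ y := fun e => hz0B (by rw [e]; exact hyB)
      have hfz0 : f z0 = r0 := by
        have hfK : f z0 ∈ K := hfbij.mapsTo hz0S
        have h1 : f z0 ≠ f u := fun e => hz0u (hfinj hz0S hu e)
        have h2 : f z0 ∉ A := by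
          intro h
          rcases hmemA _ h with e|e
          · exact hz0x (hfinj hz0S hxS e)
          · exact hz0y (hfinj hz0S hyS e)
        have hmem' : f z0 ∈ KA := by
          refine ⟨hfK, ?_⟩
          simp only [Set.mem_insert_iff, not_or]
          exact ⟨h1, h2⟩
        rw [hKA1] at hmem'
        exact hmem'
      have hFcases : ∀ e ∈ F, e = s(w, r0) ∨ e = h2 z0 ∨ e = s(w, f u) ∨ e = s(u, f u) := by
        intro e he
        rw [← hFeqU] at he
        rcases he with (he|he)|he
        · obtain ⟨c, hc, rfl⟩ := he
          rw [hKA1] at hc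
          exact Or.inl (by rw [show c = r0 from hc])
        · obtain ⟨z, hz, rfl⟩ := he
          rw [hSB1] at hz
          exact Or.inr (Or.inl (by rw [show z = z0 from hz]))
        · rcases he.1 with h|h
          exacts [Or.inr (Or.inr (Or.inl h)), Or.inr (Or.inr (Or.inr h))]
      have hwz0ne : w ≠ z0 := fun e => hwS (by rw [e]; exact hz0S)
      have hwfxne : w ≠ f x := fun e => hwK (by rw [e]; exact hAK hfxA)
      have hwfyne : w ≠ f y := fun e => hwK (by rw [e]; exact hAK hfyA)
      have hwyne : w ≠ y := fun e => hwS (by rw [e]; exact hyS)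
      have hwxne : w ≠ x := fun e => hwS (by rw [e]; exact hxS)
      have hwfune : w ≠ f u := fun e => hwK (by rw [e]; exact hbK)
      have hwr0ne : w ≠ r0 := fun e => hwK (by rw [e]; exact hr0K)
      have hufxne : u ≠ f x := fun e => hSK u hu (by rw [e]; exact hAK hfxA)
      have hufyne : u ≠ f y := fun e => hSK u hu (by rw [e]; exact hAK hfyA)
      have hur0ne : u ≠ r0 := fun e => hSK u hu (by rw [e]; exact hr0K)
      have hz0fxne : z0 ≠ f x := fun e => hSK z0 hz0S (by rw [e]; exact hAK hfxA)
      have hz0fyne : z0 ≠ f y := fun e => hSK z0 hz0S (by rw [e]; exact hAK hfyA)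
      have hz0r0ne : z0 ≠ r0 := fun e => hSK z0 hz0S (by rw [e]; exact hr0K)
      have hz0fune : z0 ≠ f u := fun e => hSK z0 hz0S (by rw [e]; exact hbK)
      have hfxyne : f x ≠ y := fun e => hSK y hyS (by rw [← e]; exact hAK hfxA)
      have hfuxne : f u ≠ x := fun e => hSK x hxS (by rw [← e]; exact hbK)
      have hyr0ne : y ≠ r0 := fun e => hSK y hyS (by rw [e]; exact hr0K)
      have hyfyne : y ≠ f y := fun e => hSK y hyS (by rw [e]; exact hAK hfyA)
      by_cases hwz0 : G'.Adj w z0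
      · -- subcase (i)
        have hh2z0 : h2 z0 = s(w, z0) := by
          rw [hh2def]
          simp only []
          rw [if_pos hwz0]
        have hNz0y : ¬ G'.Adj z0 y := by
          refine hnadj (hnbSS z0 hz0S y hyS) ?_
          intro hmem
          rcases hFcases _ hmem with he|he|he|he
          · rcases Sym2.eq_iff.mp he with ⟨h, -⟩|⟨h, -⟩
            · exact hwz0ne h.symm
            · exact hz0r0ne h
          · rw [hh2z0] at he
            rcases Sym2.eq_iff.mp he with ⟨h, -⟩|⟨-, h⟩
            · exact hwz0ne h.symm
            · exact hwyne h.symm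
          · rcases Sym2.eq_iff.mp he with ⟨h, -⟩|⟨h, -⟩
            · exact hwz0ne h.symm
            · exact hz0fune h
          · rcases Sym2.eq_iff.mp he with ⟨h, -⟩|⟨h, -⟩
            · exact hz0u h
            · exact hz0fune h
        have hP1 : IsInducedP4 G' w u (f x) y := hp4A (f x) hfxA y hyB hfxfy.symm
        have hP2 : IsInducedP4 G' w z0 (f x) y :=
          ⟨hwz0ne, hwfxne, hwyne, hz0fxne, hz0y, hfxyne,
            hwz0,
            hASK z0 hz0S (f x) (hAK hfxA) (by rw [hfz0]; exact hr0fx.symm),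
            (hASK y hyS (f x) (hAK hfxA) hfxfy).symm,
            hwfx, hwy, hNz0y⟩
        refine conflict hsp (T := {w, u, z0, f x, y})
          (ncard5 hune.symm hwz0ne hwfxne hwyne hz0u.symm hufxne hyu.symm hz0fxne hz0y hfxyne)
          ?_ ?_ hP1 hP2 ?_
        · exact insert4_subset (by simp) (by simp) (by simp) (by simp)
        · exact insert4_subset (by simp) (by simp) (by simp) (by simp)
        · intro heq
          have hm : u ∈ ({w, z0, f x, y} : Set α) := heq ▸ (by simp)
          simp only [Set.mem_insert_iff, Set.mem_singleton_iff] at hm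
          rcases hm with e|e|e|e
          exacts [hune e, hz0u e.symm, hufxne e, hyu e.symm]
      · have huz0 : G'.Adj u z0 := hz0adj.resolve_left hwz0
        have hh2z0 : h2 z0 = s(u, z0) := by
          rw [hh2def]
          simp only []
          rw [if_neg hwz0]
        by_cases hwb2 : G'.Adj w (f u)
        · -- subcase (ii)
          have hE3one : E3 = {s(w, f u)} := by
            have hE31 : E3.ncard = 1 := by omega
            obtain ⟨e0, he0⟩ := Set.ncard_eq_one.mp hE31
            have hm : s(w, f u) ∈ E3 := ⟨Or.inl rfl, hFmem hwb2 (hnbw (f u) hfuu)⟩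
            rw [he0] at hm
            have he1 : e0 = s(w, f u) := (Set.mem_singleton_iff.mp hm).symm
            rw [he0, he1]
          have hFcases2 : ∀ e ∈ F, e = s(w, r0) ∨ e = s(u, z0) ∨ e = s(w, f u) := by
            intro e he
            rw [← hFeqU] at he
            rcases he with (he|he)|he
            · obtain ⟨c, hc, rfl⟩ := he
              rw [hKA1] at hc
              exact Or.inl (by rw [show c = r0 from hc])
            · obtain ⟨z, hz, rfl⟩ := he
              rw [hSB1] at hz
              refine Or.inr (Or.inl ?_)
              rw [show z = z0 from hz]
              exact hh2z0
            · rw [hE3one] at he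
              exact Or.inr (Or.inr he)
          have hub : ¬ G'.Adj u (f u) := by
            intro h
            have hmem : s(u, f u) ∈ F := hFmem h (hnbSf u hu (f u) hbK rfl)
            rcases hFcases2 _ hmem with he|he|he
            · rcases Sym2.eq_iff.mp he with ⟨h1, -⟩|⟨h1, -⟩
              · exact hune h1
              · exact hur0ne h1
            · rcases Sym2.eq_iff.mp he with ⟨-, h1⟩|⟨h1, -⟩
              · exact hz0fune h1.symm
              · exact hz0u h1.symm
            · rcases Sym2.eq_iff.mp he with ⟨h1, -⟩|⟨h1, -⟩
              · exact hune h1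
              · exact hfuu h1.symm
          have hNz0x : ¬ G'.Adj z0 x := by
            refine hnadj (hnbSS z0 hz0S x hxS) ?_
            intro hmem
            rcases hFcases2 _ hmem with he|he|he
            · rcases Sym2.eq_iff.mp he with ⟨h, -⟩|⟨h, -⟩
              · exact hwz0ne h.symm
              · exact hz0r0ne h
            · rcases Sym2.eq_iff.mp he with ⟨h, -⟩|⟨-, h⟩
              · exact hz0u h
              · exact hxu h
            · rcases Sym2.eq_iff.mp he with ⟨h, -⟩|⟨h, -⟩
              · exact hwz0ne h.symm
              · exact hz0fune h
          have hfufx : f u ≠ f x := fun e => hxu (hfinj hu hxS e).symm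
          have hP1 : IsInducedP4 G' u w (f u) x :=
            ⟨hune, hfuu.symm, hxu.symm, hwfune, hwxne, hfuxne,
              hAuw, hwb2,
              (hASK x hxS (f u) hbK hfufx).symm,
              hub, hux, hwx⟩
          have hP2 : IsInducedP4 G' u z0 (f u) x :=
            ⟨hz0u.symm, hfuu.symm, hxu.symm, hz0fune, hz0x, hfuxne,
              huz0,
              hASK z0 hz0S (f u) hbK (by rw [hfz0]; exact hr0fu.symm),
              (hASK x hxS (f u) hbK hfufx).symm,
              hub, hux, hNz0x⟩
          refine conflict hsp (T := {u, w, z0, f u, x})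
            (ncard5 hune hz0u.symm hfuu.symm hxu.symm hwz0ne hwfune hwxne hz0fune hz0x hfuxne)
            ?_ ?_ hP1 hP2 ?_
          · exact insert4_subset (by simp) (by simp) (by simp) (by simp)
          · exact insert4_subset (by simp) (by simp) (by simp) (by simp)
          · intro heq
            have hm : w ∈ ({u, z0, f u, x} : Set α) := heq ▸ (by simp)
            simp only [Set.mem_insert_iff, Set.mem_singleton_iff] at hm
            rcases hm with e|e|e|e
            exacts [hune e.symm, hwz0ne e, hwfune e, hwxne e]
        · have hub2 : G'.Adj u (f u) := by
            rw [not_and_or, not_not, not_not] at hbeta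
            exact hbeta.resolve_left hwb2
          -- subcase (iii)
          have hE3one : E3 = {s(u, f u)} := by
            have hE31 : E3.ncard = 1 := by omega
            obtain ⟨e0, he0⟩ := Set.ncard_eq_one.mp hE31
            have hm : s(u, f u) ∈ E3 := ⟨Or.inr rfl, hFmem hub2 (hnbSf u hu (f u) hbK rfl)⟩
            rw [he0] at hm
            have he1 : e0 = s(u, f u) := (Set.mem_singleton_iff.mp hm).symm
            rw [he0, he1]
          have hFcases3 : ∀ e ∈ F, e = s(w, r0) ∨ e = s(u, z0) ∨ e = s(u, f u) := by
            intro e he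
            rw [← hFeqU] at he
            rcases he with (he|he)|he
            · obtain ⟨c, hc, rfl⟩ := he
              rw [hKA1] at hc
              exact Or.inl (by rw [show c = r0 from hc])
            · obtain ⟨z, hz, rfl⟩ := he
              rw [hSB1] at hz
              refine Or.inr (Or.inl ?_)
              rw [show z = z0 from hz]
              exact hh2z0
            · rw [hE3one] at he
              exact Or.inr (Or.inr he)
          have hNz0r0 : ¬ G'.Adj z0 r0 := by
            refine hnadj (hnbSf z0 hz0S r0 hr0K hfz0.symm) ?_
            intro hmem
            rcases hFcases3 _ hmem with he|he|he
            · rcases Sym2.eq_iff.mp he with ⟨h, -⟩|⟨h, -⟩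
              · exact hwz0ne h.symm
              · exact hz0r0ne h
            · rcases Sym2.eq_iff.mp he with ⟨h, -⟩|⟨-, h⟩
              · exact hz0u h
              · exact hur0ne h.symm
            · rcases Sym2.eq_iff.mp he with ⟨h, -⟩|⟨h, -⟩
              · exact hz0u h
              · exact hz0fune h
          have hNz0y : ¬ G'.Adj z0 y := by
            refine hnadj (hnbSS z0 hz0S y hyS) ?_
            intro hmem
            rcases hFcases3 _ hmem with he|he|he
            · rcases Sym2.eq_iff.mp he with ⟨h, -⟩|⟨h, -⟩
              · exact hwz0ne h.symm
              · exact hz0r0ne h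
            · rcases Sym2.eq_iff.mp he with ⟨h, -⟩|⟨-, h⟩
              · exact hz0u h
              · exact hyu h
            · rcases Sym2.eq_iff.mp he with ⟨h, -⟩|⟨h, -⟩
              · exact hz0u h
              · exact hz0fune h
          have hNyfy : ¬ G'.Adj y (f y) := by
            refine hnadj (hnbSf y hyS (f y) (hAK hfyA) rfl) ?_
            intro hmem
            rcases hFcases3 _ hmem with he|he|he
            · rcases Sym2.eq_iff.mp he with ⟨h, -⟩|⟨h, -⟩
              · exact hwyne h.symm
              · exact hyr0ne h
            · rcases Sym2.eq_iff.mp he with ⟨h, -⟩|⟨-, h⟩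
              · exact hyu h
              · exact hufyne h.symm
            · rcases Sym2.eq_iff.mp he with ⟨h, -⟩|⟨h, -⟩
              · exact hyu h
              · exact hSK y hyS (by rw [h]; exact hbK)
          have hP1 : IsInducedP4 G' z0 u r0 y :=
            ⟨hz0u, hz0r0ne, hz0y, hur0ne, hyu.symm, hyr0ne.symm,
              huz0.symm,
              hASK u hu r0 hr0K hr0fu,
              (hASK y hyS r0 hr0K hr0fy).symm,
              hNz0r0, hNz0y, huy⟩
          have hP2 : IsInducedP4 G' y r0 (f y) z0 :=
            ⟨hyr0ne, hyfyne, hz0y.symm, hr0fy, hz0r0ne.symm, hz0fyne.symm,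
              hASK y hyS r0 hr0K hr0fy,
              hAKK r0 hr0K (f y) (hAK hfyA) hr0fy,
              (hASK z0 hz0S (f y) (hAK hfyA) (by rw [hfz0]; exact hr0fy.symm)).symm,
              hNyfy, fun h => hNz0y h.symm, fun h => hNz0r0 h.symm⟩
          refine conflict hsp (T := {u, z0, y, r0, f y})
            (ncard5 hz0u.symm hyu.symm hur0ne hufyne hz0y hz0r0ne hz0fyne hyr0ne hyfyne hr0fy)
            ?_ ?_ hP1 hP2 ?_
          · exact insert4_subset (by simp) (by simp) (by simp) (by simp)
          · exact insert4_subset (by simp) (by simp) (by simp) (by simp)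
          · intro heq
            have hm : u ∈ ({y, r0, f y, z0} : Set α) := heq ▸ (by simp)
            simp only [Set.mem_insert_iff, Set.mem_singleton_iff] at hm
            rcases hm with e|e|e|e
            exacts [hyu e.symm, hur0ne e, hufyne e, hz0u e.symm]
end
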